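/- arXiv:0708.3009 — 6 statements merged into one kernel-verified Lean document; each statement's English description precedes it below -/
import Mathlib

section
/- Let n and f be natural numbers with 0 ≤ 2f ≤ n, and let ν = ((2^f), (n-2f)) be the bipartition of n whose first component is the partition with f rows of length 2. Let D_ν be the set of permutations d in the symmetric group S_n such that the bitableau t^ν d is row standard and the first column of its first component tableau is increasing from top to bottom. If d ∈ D_ν and d = d' s_j with ℓ(d) = ℓ(d') + 1 for some simple transposition s_j (1 ≤ j ≤ n-1), then d' ∈ D_ν. -/
/-!
STATEMENT 1.  Positions are 0-based: the initial bitableau `t^ν` for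
`ν = ((2^f),(n-2f))` puts `0,…,2f-1` along the rows of the `f × 2` first
component and `2f,…,n-1` in the single row of the second component.
A permutation of `{0,…,n-1}` is modelled as an element of `Equiv.Perm ℕ`
fixing everything `≥ n`; the entry of `t^ν d` at position `p` is `d p`.
The paper's right-action product `d' s_j` corresponds to `sw j * d'`
(apply `d'` first, then the simple transposition), and the Coxeter length
is the number of inversions.
-/

noncomputable section

/-- The simple transposition `s_{j+1}` (paper's 1-based `s_j` is `sw (j-1)`). -/
def sw (a : ℕ) : Equiv.Perm ℕ := Equiv.swap a (a + 1)

/-- Coxeter length = number of inversions. -/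
noncomputable def len (σ : Equiv.Perm ℕ) : ℕ :=
  Set.ncard {p : ℕ × ℕ | p.1 < p.2 ∧ σ p.2 < σ p.1}

/-- `d ∈ D_ν` for `ν = ((2^f),(n-2f))`: `d` permutes `{0,…,n-1}`, the bitableau
`t^ν d` is row standard, and the first column of its first component increases
from top to bottom. -/
def Dnu (n f : ℕ) (d : Equiv.Perm ℕ) : Prop :=
  (∀ x, n ≤ x → d x = x) ∧
  (∀ k, k < f → d (2 * k) < d (2 * k + 1)) ∧
  (∀ k, k + 1 < f → d (2 * k) < d (2 * k + 2)) ∧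
  (∀ j, 2 * f ≤ j → j + 1 < n → d j < d (j + 1))

/-- The swap `(j, j+1)` preserves strict order except on the pair `(j, j+1)`. -/
lemma swap_order (j x y : ℕ) (hxy : x < y) (hne : ¬(x = j ∧ y = j + 1)) :
    Equiv.swap j (j + 1) x < Equiv.swap j (j + 1) y := by
  rw [Equiv.swap_apply_def, Equiv.swap_apply_def]
  split_ifs <;> omega

/-- Key: the length condition forbids `d p = j`, `d q = j+1` with `p < q`. -/
lemma no_bad_pair (d d' : Equiv.Perm ℕ) (j : ℕ) (hdd : d = sw j * d')
    (hlen : len d = len d' + 1) (p q : ℕ) (hpq : p < q)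
    (hp : d p = j) (hq : d q = j + 1) : False := by
  have hd' : ∀ x, d' x = Equiv.swap j (j + 1) (d x) := by
    intro x
    have : d x = Equiv.swap j (j + 1) (d' x) := by rw [hdd]; rfl
    rw [this, Equiv.swap_apply_self]
  have hinj : Function.Injective d := d.injective
  -- inversion sets
  set A : Set (ℕ × ℕ) := {r : ℕ × ℕ | r.1 < r.2 ∧ d r.2 < d r.1} with hA
  set B : Set (ℕ × ℕ) := {r : ℕ × ℕ | r.1 < r.2 ∧ d' r.2 < d' r.1} with hB
  have hBeq : B = insert (p, q) A := by
    ext ⟨x, y⟩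
    simp only [hA, hB, Set.mem_setOf_eq, Set.mem_insert_iff, Prod.mk.injEq]
    constructor
    · rintro ⟨hxy, hlt⟩
      by_cases hcase : x = p ∧ y = q
      · exact Or.inl ⟨hcase.1, hcase.2⟩
      · right
        refine ⟨hxy, ?_⟩
        by_contra hnot
        have hne : d x ≠ d y := fun h => (Nat.lt_irrefl x (hinj h ▸ hxy))
        have hlt' : d x < d y := by omega
        have : Equiv.swap j (j + 1) (d x) < Equiv.swap j (j + 1) (d y) := by
          apply swap_order _ _ _ hlt'
          rintro ⟨h1, h2⟩
          exact hcase ⟨hinj (h1.trans hp.symm), hinj (h2.trans hq.symm)⟩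
        rw [← hd', ← hd'] at this
        omega
    · rintro (⟨hx, hy⟩ | ⟨hxy, hlt⟩)
      · subst hx; subst hy
        refine ⟨hpq, ?_⟩
        rw [hd', hd', hp, hq, Equiv.swap_apply_left, Equiv.swap_apply_right]
        omega
      · refine ⟨hxy, ?_⟩
        rw [hd', hd']
        apply swap_order _ _ _ hlt
        rintro ⟨h1, h2⟩
        have : y = p := hinj (h1.trans hp.symm)
        have : x = q := hinj (h2.trans hq.symm)
        omega
  have hpqA : (p, q) ∉ A := by
    simp only [hA, Set.mem_setOf_eq, hp, hq]
    omega
  have hAfin : A.Finite := by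
    by_contra hinf
    have : len d = 0 := Set.Infinite.ncard hinf
    omega
  have : len d' = len d + 1 := by
    show B.ncard = A.ncard + 1
    rw [hBeq, Set.ncard_insert_of_notMem hpqA hAfin]
  omega

theorem stmt1 (n f : ℕ) (h2f : 2 * f ≤ n) (d d' : Equiv.Perm ℕ) (j : ℕ)
    (hj : j + 2 ≤ n) (hdd : d = sw j * d') (hlen : len d = len d' + 1)
    (hd : Dnu n f d) : Dnu n f d' := by
  obtain ⟨hfix, hrow1, hcol, hrow2⟩ := hd
  have hd' : ∀ x, d' x = Equiv.swap j (j + 1) (d x) := by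
    intro x
    have : d x = Equiv.swap j (j + 1) (d' x) := by rw [hdd]; rfl
    rw [this, Equiv.swap_apply_self]
  have key : ∀ p q : ℕ, p < q → d p < d q → d' p < d' q := by
    intro p q hpq hlt
    rw [hd', hd']
    apply swap_order _ _ _ hlt
    rintro ⟨h1, h2⟩
    exact no_bad_pair d d' j hdd hlen p q hpq h1 h2
  refine ⟨?_, ?_, ?_, ?_⟩
  · intro x hx
    rw [hd', hfix x hx, Equiv.swap_apply_def]
    split_ifs <;> omega
  · intro k hk
    exact key _ _ (by omega) (hrow1 k hk)
  · intro k hk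
    exact key _ _ (by omega) (hcol k hk)
  · intro i hi1 hi2
    exact key _ _ (by omega) (hrow2 i hi1 hi2)

end
end

section
/- Let f ≥ 1, let S_{(2^f)} ≤ S_{2f} be the Young subgroup generated by s_1, s_3, ..., s_{2f-1}, and let Π ≤ S_{2f} be the group permuting the f consecutive blocks {1,2},{3,4},...,{2f-1,2f} (generated by the elements s_{2i} s_{2i-1} s_{2i+1} s_{2i} for 1 ≤ i ≤ f-1). Set Ψ = S_{(2^f)} ⋊ Π. If d ∈ D_f (the set of distinguished elements of D_ν lying in S_{2f}), then for every w ∈ Ψ one has ℓ(wd) ≥ ℓ(d). -/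
/-!
STATEMENT 2.  Everything is 0-based inside `Equiv.Perm ℕ`: elements of
`S_{2f}` are permutations fixing all `x ≥ 2f`.  The paper's 1-based simple
transposition `s_j` is `sw (j-1)`, so the Young subgroup `S_{(2^f)}` is
generated by `sw (2k)` for `k < f`, and the block-permuting group `Π` is
generated by the paper elements `s̃_i = s_{2i} s_{2i-1} s_{2i+1} s_{2i}`
(`1 ≤ i ≤ f-1`), which (with the paper's right-action composition) are the
permutations `st i0 = sw (2i0+1) * sw (2i0+2) * sw (2i0) * sw (2i0+1)`
for `i0 = i - 1 < f - 1`.  `Ψ = S_{(2^f)} ⋊ Π` is the subgroup generated by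
all of these.  The paper's right-action product `w d` is the function
`d ∘ w`, i.e. `d * w` in Mathlib's convention, and length = #inversions.
-/

noncomputable section

/-- The block-swapping generator `s̃_{i+1} = s_{2i+2} s_{2i+1} s_{2i+3} s_{2i+2}`
(paper, 1-based), as a permutation. -/
def st (i : ℕ) : Equiv.Perm ℕ :=
  sw (2 * i + 1) * sw (2 * i + 2) * sw (2 * i) * sw (2 * i + 1)

/-- `Ψ = S_{(2^f)} ⋊ Π`. -/
def Psi (f : ℕ) : Subgroup (Equiv.Perm ℕ) :=
  Subgroup.closure
    ({σ | ∃ k, k < f ∧ σ = sw (2 * k)} ∪ {σ | ∃ i, i + 1 < f ∧ σ = st i})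

/-- `d ∈ D_f`: `d ∈ S_{2f}`, the tableau `t^{(2^f)} d` is row standard and its
first column increases from top to bottom. -/
def Df (f : ℕ) (d : Equiv.Perm ℕ) : Prop :=
  (∀ x, 2 * f ≤ x → d x = x) ∧
  (∀ k, k < f → d (2 * k) < d (2 * k + 1)) ∧
  (∀ k, k + 1 < f → d (2 * k) < d (2 * k + 2))

/-! ### Auxiliary material -/

/-- `w` fixes everything `≥ 2f` and permutes the blocks `{2k, 2k+1}`. -/
def Qb (f : ℕ) (w : Equiv.Perm ℕ) : Prop :=
  (∀ x, 2 * f ≤ x → w x = x) ∧ (∀ k, k < f → w (2 * k) / 2 = w (2 * k + 1) / 2)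

lemma maps_lt {f : ℕ} {w : Equiv.Perm ℕ} (h1 : ∀ x, 2 * f ≤ x → w x = x)
    {x : ℕ} (hx : x < 2 * f) : w x < 2 * f := by
  by_contra h
  push_neg at h
  have h2 := h1 _ h
  have h3 := w.injective h2
  omega

lemma Qb_one (f : ℕ) : Qb f 1 := ⟨fun _ _ => rfl, fun k _ => by
  simp only [Equiv.Perm.one_apply]; omega⟩

lemma Qb_mul {f : ℕ} {u v : Equiv.Perm ℕ} (hu : Qb f u) (hv : Qb f v) :
    Qb f (u * v) := by
  constructor
  · intro x hx
    simp [Equiv.Perm.mul_apply, hv.1 x hx, hu.1 x hx]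
  · intro k hk
    have h2 : v (2 * k) / 2 = v (2 * k + 1) / 2 := hv.2 k hk
    have hlt : v (2 * k) < 2 * f := maps_lt hv.1 (by omega)
    have hlt' : v (2 * k + 1) < 2 * f := maps_lt hv.1 (by omega)
    have hm : v (2 * k) / 2 < f := by omega
    have h3 := hu.2 (v (2 * k) / 2) hm
    have e1 : v (2 * k) = 2 * (v (2 * k) / 2) ∨ v (2 * k) = 2 * (v (2 * k) / 2) + 1 := by omega
    have e2 : v (2 * k + 1) = 2 * (v (2 * k) / 2) ∨
        v (2 * k + 1) = 2 * (v (2 * k) / 2) + 1 := by omega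
    simp only [Equiv.Perm.mul_apply]
    rcases e1 with e1 | e1 <;> rcases e2 with e2 | e2 <;> rw [e1, e2] <;> omega

lemma sw_apply (a x : ℕ) :
    sw a x = if x = a then a + 1 else if x = a + 1 then a else x := by
  simp [sw, Equiv.swap_apply_def]

lemma Qb_sw {f k : ℕ} (hk : k < f) : Qb f (sw (2 * k)) := by
  constructor
  · intro x hx; rw [sw_apply]; split_ifs <;> omega
  · intro j hj; rw [sw_apply, sw_apply]; split_ifs <;> omega

lemma st_apply (i x : ℕ) : st i x =
    if x = 2 * i then 2 * i + 2 else if x = 2 * i + 1 then 2 * i + 3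
    else if x = 2 * i + 2 then 2 * i else if x = 2 * i + 3 then 2 * i + 1 else x := by
  simp only [st, Equiv.Perm.mul_apply, sw_apply]
  split_ifs <;> omega

lemma Qb_st {f i : ℕ} (hi : i + 1 < f) : Qb f (st i) := by
  constructor
  · intro x hx; rw [st_apply]; split_ifs <;> omega
  · intro j hj; rw [st_apply, st_apply]; split_ifs <;> omega

lemma Qb_inv {f : ℕ} {w : Equiv.Perm ℕ} (hw : Qb f w) : Qb f w⁻¹ := by
  have hfix : ∀ x, 2 * f ≤ x → w⁻¹ x = x := by
    intro x hx
    have h1 := hw.1 x hx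
    calc w⁻¹ x = w⁻¹ (w x) := by rw [h1]
    _ = x := w.symm_apply_apply x
  refine ⟨hfix, ?_⟩
  intro m hm
  set u := w⁻¹ (2 * m) with hu
  set v := w⁻¹ (2 * m + 1) with hv
  have hul : u < 2 * f := maps_lt hfix (by omega)
  have hvl : v < 2 * f := maps_lt hfix (by omega)
  have hwu : w u = 2 * m := w.apply_symm_apply _
  have hwv : w v = 2 * m + 1 := w.apply_symm_apply _
  have huv : u ≠ v := by
    intro h; rw [h] at hwu; omega
  by_contra hne
  set p := u / 2 with hp
  set q := v / 2 with hq
  have hpf : p < f := by omega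
  have hqf : q < f := by omega
  have h1 := hw.2 p hpf
  have h2 := hw.2 q hqf
  have e1 : u = 2 * p ∨ u = 2 * p + 1 := by omega
  have e2 : v = 2 * q ∨ v = 2 * q + 1 := by omega
  have hne4 : (2 : ℕ) * p ≠ 2 * q ∧ 2 * p ≠ 2 * q + 1 ∧ 2 * p + 1 ≠ 2 * q ∧
      2 * p + 1 ≠ 2 * q + 1 := by omega
  have i1 : w (2 * p) ≠ w (2 * q) := fun h => hne4.1 (w.injective h)
  have i2 : w (2 * p) ≠ w (2 * q + 1) := fun h => hne4.2.1 (w.injective h)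
  have i3 : w (2 * p + 1) ≠ w (2 * q) := fun h => hne4.2.2.1 (w.injective h)
  have i4 : w (2 * p + 1) ≠ w (2 * q + 1) := fun h => hne4.2.2.2 (w.injective h)
  have i5 : w (2 * p) ≠ w (2 * p + 1) := fun h => by have := w.injective h; omega
  have i6 : w (2 * q) ≠ w (2 * q + 1) := fun h => by have := w.injective h; omega
  rcases e1 with e1 | e1 <;> rcases e2 with e2 | e2 <;>
    rw [e1] at hwu <;> rw [e2] at hwv <;> omega

lemma mem_Psi_Qb {f : ℕ} {w : Equiv.Perm ℕ} (hw : w ∈ Psi f) : Qb f w := by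
  refine Subgroup.closure_induction ?_ (Qb_one f)
    (fun a b _ _ ha hb => Qb_mul ha hb) (fun a _ ha => Qb_inv ha) hw
  rintro σ (⟨k, hk, rfl⟩ | ⟨i, hi, rfl⟩)
  · exact Qb_sw hk
  · exact Qb_st hi

lemma chain {f : ℕ} {d : Equiv.Perm ℕ} (hd : Df f d) :
    ∀ l k, k < l → l < f → d (2 * k) < d (2 * l) := by
  intro l
  induction l with
  | zero => intro k hk _; omega
  | succ n ih =>
    intro k hk hl
    have h2 : d (2 * n) < d (2 * n + 2) := hd.2.2 n (by omega)
    have he : 2 * (n + 1) = 2 * n + 2 := by omega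
    rw [he]
    rcases Nat.lt_or_ge k n with h | h
    · exact (ih k h (by omega)).trans h2
    · have : k = n := by omega
      rw [this]; exact h2

lemma dlt {f : ℕ} {d : Equiv.Perm ℕ} (hd : Df f d) {k b : ℕ}
    (hk : k < b / 2) (hb : b < 2 * f) : d (2 * k) < d b := by
  have hl : b / 2 < f := by omega
  have h1 : d (2 * k) < d (2 * (b / 2)) := chain hd (b / 2) k hk hl
  rcases (by omega : b = 2 * (b / 2) ∨ b = 2 * (b / 2) + 1) with e | e
  · rwa [← e] at h1
  · have h2 : d (2 * (b / 2)) < d (2 * (b / 2) + 1) := hd.2.1 (b / 2) hl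
    have h3 := h1.trans h2
    rwa [← e] at h3

def Fmap (w : Equiv.Perm ℕ) : ℕ × ℕ → ℕ × ℕ := fun p =>
  if w⁻¹ p.1 < w⁻¹ p.2 then (w⁻¹ p.1, w⁻¹ p.2) else (w⁻¹ p.2, w⁻¹ (p.1 - 1))

def Gmap (w : Equiv.Perm ℕ) : ℕ × ℕ → ℕ × ℕ := fun p =>
  if w p.1 < w p.2 then (w p.1, w p.2) else (w p.2 + 1, w p.1)

theorem stmt2 (f : ℕ) (hf : 1 ≤ f) (d : Equiv.Perm ℕ) (hd : Df f d)
    (w : Equiv.Perm ℕ) (hw : w ∈ Psi f) : len d ≤ len (d * w) := by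
  have hQ : Qb f w := mem_Psi_Qb hw
  have hQi : Qb f w⁻¹ := Qb_inv hQ
  have hdw : ∀ x, 2 * f ≤ x → (d * w) x = x := fun x hx => by
    simp [Equiv.Perm.mul_apply, hQ.1 x hx, hd.1 x hx]
  have hsub : {p : ℕ × ℕ | p.1 < p.2 ∧ (d * w) p.2 < (d * w) p.1} ⊆
      Set.Iio (2 * f) ×ˢ Set.Iio (2 * f) := by
    rintro ⟨a, b⟩ ⟨hab, hba⟩
    simp only at hab hba
    have hb : b < 2 * f := by
      by_contra h; push_neg at h
      have h1 : (d * w) b = b := hdw b h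
      rcases Nat.lt_or_ge a (2 * f) with h2 | h2
      · have h3 := maps_lt hdw h2; omega
      · have h3 := hdw a h2; omega
    have ha : a < 2 * f := by omega
    exact ⟨ha, hb⟩
  have hfin : {p : ℕ × ℕ | p.1 < p.2 ∧ (d * w) p.2 < (d * w) p.1}.Finite :=
    Set.Finite.subset ((Set.finite_Iio _).prod (Set.finite_Iio _)) hsub
  have key : ∀ p : ℕ × ℕ, p.1 < p.2 → d p.2 < d p.1 →
      ((Fmap w p).1 < (Fmap w p).2 ∧ (d * w) (Fmap w p).2 < (d * w) (Fmap w p).1) ∧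
        Gmap w (Fmap w p) = p := by
    rintro ⟨a, b⟩ hab hba
    simp only at hab hba
    have hb2 : b < 2 * f := by
      by_contra h; push_neg at h
      have h1 : d b = b := hd.1 b h
      rcases Nat.lt_or_ge a (2 * f) with h2 | h2
      · have h3 := maps_lt hd.1 h2; omega
      · have h3 := hd.1 a h2; omega
    have ha2 : a < 2 * f := by
      by_contra h; push_neg at h
      have h1 := hd.1 a h
      have h2 := hd.1 b (by omega)
      omega
    by_cases hcase : w⁻¹ a < w⁻¹ b
    · have hFp : Fmap w (a, b) = (w⁻¹ a, w⁻¹ b) := by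
        simp only [Fmap, if_pos hcase]
      rw [hFp]
      refine ⟨⟨hcase, ?_⟩, ?_⟩
      · simpa [Equiv.Perm.mul_apply] using hba
      · simp only [Gmap, Equiv.Perm.coe_inv, Equiv.apply_symm_apply, if_pos hab]
    · have hne : w⁻¹ a ≠ w⁻¹ b := fun h => by
        have h2 := w⁻¹.injective h; omega
      have hvu : w⁻¹ b < w⁻¹ a := by omega
      have hodd : a % 2 = 1 := by
        by_contra h
        have he : a = 2 * (a / 2) := by omega
        have hcontra : d a < d b := by
          rcases Nat.lt_or_ge (a / 2) (b / 2) with h2 | h2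
          · have h3 := dlt hd h2 hb2
            rwa [← he] at h3
          · have hb' : b = 2 * (a / 2) + 1 := by omega
            have h3 := hd.2.1 (a / 2) (by omega)
            rw [← hb'] at h3
            rwa [← he] at h3
        omega
      have hblt : a / 2 < b / 2 := by omega
      have hu2 : w⁻¹ a < 2 * f := maps_lt hQi.1 ha2
      have hv2 : w⁻¹ b < 2 * f := maps_lt hQi.1 hb2
      have hba' : w⁻¹ (2 * (a / 2)) / 2 = w⁻¹ a / 2 := by
        have h1 := hQi.2 (a / 2) (by omega)
        have he : a = 2 * (a / 2) + 1 := by omega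
        rwa [← he] at h1
      have hdiff : w⁻¹ a / 2 ≠ w⁻¹ b / 2 := by
        intro hdeq
        set u := w⁻¹ a with hu
        set v := w⁻¹ b with hv
        set m := u / 2 with hm'
        have hmf : m < f := by omega
        have h1 := hQ.2 m hmf
        have e : (u = 2 * m ∧ v = 2 * m + 1) ∨ (v = 2 * m ∧ u = 2 * m + 1) := by omega
        have hwu : w u = a := w.apply_symm_apply a
        have hwv : w v = b := w.apply_symm_apply b
        rcases e with ⟨e1, e2⟩ | ⟨e1, e2⟩
        · rw [e1] at hwu; rw [e2] at hwv; omega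
        · rw [e2] at hwu; rw [e1] at hwv; omega
      have hblk2 : w⁻¹ b / 2 < w⁻¹ a / 2 := by omega
      have hstep1 : w⁻¹ (a - 1) / 2 = w⁻¹ a / 2 := by
        have he : a - 1 = 2 * (a / 2) := by omega
        rw [he]; exact hba'
      have hstep : w⁻¹ b < w⁻¹ (a - 1) := by omega
      have hFp : Fmap w (a, b) = (w⁻¹ b, w⁻¹ (a - 1)) := by
        simp only [Fmap, if_neg hcase]
      rw [hFp]
      refine ⟨⟨hstep, ?_⟩, ?_⟩
      · simp only [Equiv.Perm.mul_apply, Equiv.Perm.coe_inv, Equiv.apply_symm_apply]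
        have he : a - 1 = 2 * (a / 2) := by omega
        rw [he]
        exact dlt hd hblt hb2
      · simp only [Gmap, Equiv.Perm.coe_inv, Equiv.apply_symm_apply]
        rw [if_neg (by omega : ¬ b < a - 1)]
        have he : a - 1 + 1 = a := by omega
        rw [he]
  unfold len
  refine Set.ncard_le_ncard_of_injOn (Fmap w) ?_ ?_ hfin
  · rintro p ⟨h1, h2⟩
    exact (key p h1 h2).1
  · rintro p ⟨hp1, hp2⟩ q ⟨hq1, hq2⟩ hpq
    rw [← (key p hp1 hp2).2, ← (key q hq1 hq2).2, hpq]
end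
end

section
/- Let f ≥ 1 and let d_0 ∈ S_{2f} be the permutation defined by (a)d_0 = (a+1)/2 if a is odd and (a)d_0 = 2f + 1 - a/2 if a is even. Then ℓ(d_0) = f(f-1), and the word (s_{2f-2}s_{2f-1})(s_{2f-4}s_{2f-3}s_{2f-2}s_{2f-1}) ··· (s_2 s_3 ··· s_{2f-2}s_{2f-1}) is a reduced expression of d_0. -/
/-!
STATEMENT 4.  0-based conventions in `Equiv.Perm ℕ`; the paper's 1-based
`(a)d_0 = (a+1)/2` (a odd), `(a)d_0 = 2f+1-a/2` (a even) becomes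
`d0 (2k) = k`, `d0 (2k+1) = 2f-1-k` for `k < f`, with `d0` fixing `x ≥ 2f`.
The paper's word
`(s_{2f-2}s_{2f-1})(s_{2f-4}s_{2f-3}s_{2f-2}s_{2f-1})⋯(s_2 s_3⋯s_{2f-2}s_{2f-1})`
is the letter list `word4 f` (0-based letters, the segment for
`k = 1,…,f-1` being `s_{2f-2k},…,s_{2f-1}`, i.e. 0-based
`2f-2k-1,…,2f-2`).  Since the paper composes left-to-right, the
corresponding Mathlib product is over the reversed list.  Reducedness is
expressed by `len d0 = f(f-1) =` number of letters.
-/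

noncomputable section

/-- The paper's word for `d_0`, as its list of 0-based letters read left to
right: for `j = 0,…,f-2` the segment `2f-2(j+1)-1, …, 2f-2` (which is the
paper's `s_{2f-2(j+1)} ⋯ s_{2f-1}`). -/
def word4 (f : ℕ) : List ℕ :=
  ((List.range (f - 1)).map (fun j =>
    (List.range (2 * (j + 1))).map (· + (2 * f - 2 * (j + 1) - 1)))).flatten

/-! ### Auxiliary machinery -/

def cyc (a n x : ℕ) : ℕ :=
  if x = a ∧ 0 < n then a + n else if a < x ∧ x ≤ a + n then x - 1 else x

lemma run_prod (a n x : ℕ) :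
    ((((List.range n).map (· + a)).reverse.map sw).prod) x = cyc a n x := by
  induction n generalizing x with
  | zero =>
    simp only [List.range_zero, List.map_nil, List.reverse_nil, List.prod_nil,
      Equiv.Perm.one_apply, cyc]
    split_ifs <;> omega
  | succ n ih =>
    rw [List.range_succ, List.map_append, List.reverse_append]
    simp only [List.map_cons, List.map_nil, List.reverse_cons, List.reverse_nil,
      List.nil_append, List.singleton_append, List.prod_cons]
    rw [Equiv.Perm.mul_apply, ih, sw_apply]
    simp only [cyc]
    split_ifs <;> omega

def seg (f j : ℕ) : List ℕ := (List.range (2 * (j + 1))).map (· + (2 * f - 2 * (j + 1) - 1))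

def wordm (f m : ℕ) : List ℕ := ((List.range m).map (seg f)).flatten

lemma word4_eq (f : ℕ) : word4 f = wordm f (f - 1) := rfl

def gfun (f m x : ℕ) : ℕ :=
  if x < 2 * f - 2 * m - 1 ∨ 2 * f ≤ x then x
  else if (x - (2 * f - 2 * m - 1)) % 2 = 1 then (2 * f - 2 * m - 1) + (x - (2 * f - 2 * m - 1)) / 2
  else 2 * f - 1 - (x - (2 * f - 2 * m - 1)) / 2

lemma Q_eq (f : ℕ) (hf : 1 ≤ f) : ∀ m, m ≤ f - 1 → ∀ x,
    (((wordm f m).reverse.map sw).prod) x = gfun f m x := by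
  intro m
  induction m with
  | zero =>
    intro _ x
    simp only [wordm, List.range_zero, List.map_nil, List.flatten_nil, List.reverse_nil,
      List.prod_nil, Equiv.Perm.one_apply]
    simp only [gfun]
    split_ifs <;> omega
  | succ m ih =>
    intro hm x
    have hm' : m ≤ f - 1 := by omega
    have : wordm f (m + 1) = wordm f m ++ seg f m := by
      simp [wordm, List.range_succ]
    rw [this, List.reverse_append, List.map_append, List.prod_append,
      Equiv.Perm.mul_apply, ih hm' x]
    rw [show ((seg f m).reverse.map sw).prod = (((List.range (2 * (m + 1))).map
      (· + (2 * f - 2 * (m + 1) - 1))).reverse.map sw).prod from rfl, run_prod]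
    simp only [cyc, gfun]
    split_ifs <;> omega

def D (f x : ℕ) : ℕ := if 2 * f ≤ x then x else if x % 2 = 0 then x / 2 else 2 * f - 1 - x / 2

lemma gfun_top (f : ℕ) (hf : 1 ≤ f) (x : ℕ) : gfun f (f - 1) x = D f x := by
  simp only [gfun, D]
  split_ifs <;> omega

/-! ### The inversion set -/

def invF (f : ℕ) : Finset (ℕ × ℕ) :=
  ((Finset.range f).offDiag).image
    (fun p => if p.1 < p.2 then (2 * p.1 + 1, 2 * p.2 + 1) else (2 * p.2 + 1, 2 * p.1))

lemma invF_card (f : ℕ) : (invF f).card = f * (f - 1) := by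
  rw [invF, Finset.card_image_of_injOn, Finset.offDiag_card, Finset.card_range]
  · cases f with
    | zero => rfl
    | succ n =>
      have h1 : (n + 1) * (n + 1) = (n + 1) * n + (n + 1) := by ring
      have h2 : (n + 1) * (n + 1 - 1) = (n + 1) * n := by norm_num
      omega
  · intro p hp q hq h
    simp only [Finset.mem_coe, Finset.mem_offDiag, Finset.mem_range] at hp hq
    rw [Prod.ext_iff]
    dsimp only at h
    split_ifs at h <;> simp only [Prod.mk.injEq] at h <;> omega

lemma invF_set (f : ℕ) :
    {p : ℕ × ℕ | p.1 < p.2 ∧ D f p.2 < D f p.1} = ↑(invF f) := by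
  have Dlt : ∀ x, x < 2 * f → D f x < 2 * f := by
    intro x hx; simp only [D]; split_ifs <;> omega
  have Dge : ∀ x, 2 * f ≤ x → D f x = x := by
    intro x hx; simp only [D, if_pos hx]
  ext ⟨x, y⟩
  simp only [Set.mem_setOf_eq, Finset.coe_image, Set.mem_image, Finset.mem_coe,
    Finset.mem_offDiag, Finset.mem_range, invF]
  constructor
  · rintro ⟨hxy, hd⟩
    have hy2 : y < 2 * f := by
      by_contra h
      push_neg at h
      rw [Dge y h] at hd
      rcases lt_or_ge x (2 * f) with h' | h'
      · have := Dlt x h'; omega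
      · rw [Dge x h'] at hd; omega
    have hx2 : x < 2 * f := by omega
    have hDx : D f x = if x % 2 = 0 then x / 2 else 2 * f - 1 - x / 2 := by
      rw [D, if_neg (by omega)]
    have hDy : D f y = if y % 2 = 0 then y / 2 else 2 * f - 1 - y / 2 := by
      rw [D, if_neg (by omega)]
    rw [hDx, hDy] at hd
    by_cases hx : x % 2 = 0 <;> by_cases hy : y % 2 = 0
    · exfalso; rw [if_pos hx, if_pos hy] at hd; omega
    · exfalso; rw [if_pos hx, if_neg hy] at hd; omega
    · -- x odd, y even
      refine ⟨(y / 2, x / 2), ⟨by omega, by omega, by omega⟩, ?_⟩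
      rw [if_neg (by omega)]
      simp only [Prod.mk.injEq]
      omega
    · -- x odd, y odd
      refine ⟨(x / 2, y / 2), ⟨by omega, by omega, by omega⟩, ?_⟩
      rw [if_pos (by omega)]
      simp only [Prod.mk.injEq]
      omega
  · rintro ⟨⟨a, b⟩, ⟨ha, hb, hab⟩, heq⟩
    by_cases h : a < b
    · rw [if_pos h] at heq
      simp only [Prod.mk.injEq] at heq
      obtain ⟨h1, h2⟩ := heq
      subst h1; subst h2
      constructor
      · omega
      · rw [D, if_neg (by omega), if_neg (by omega), D, if_neg (by omega), if_neg (by omega)]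
        omega
    · rw [if_neg h] at heq
      simp only [Prod.mk.injEq] at heq
      obtain ⟨h1, h2⟩ := heq
      subst h1; subst h2
      constructor
      · omega
      · rw [D, if_neg (by omega), if_pos (by omega), D, if_neg (by omega), if_neg (by omega)]
        omega

lemma sum_aux : ∀ n : ℕ, (((List.range n).map (fun j => 2 * (j + 1))).sum) = n * (n + 1) := by
  intro n
  induction n with
  | zero => rfl
  | succ n ih =>
    rw [List.range_succ, List.map_append, List.sum_append, ih]
    simp
    ring

theorem stmt4 (f : ℕ) (hf : 1 ≤ f) (d0 : Equiv.Perm ℕ)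
    (hfix : ∀ x, 2 * f ≤ x → d0 x = x)
    (he : ∀ k, k < f → d0 (2 * k) = k)
    (ho : ∀ k, k < f → d0 (2 * k + 1) = 2 * f - 1 - k) :
    len d0 = f * (f - 1) ∧
    d0 = (((word4 f).reverse).map sw).prod ∧
    (word4 f).length = f * (f - 1) := by
  have hD : ∀ x, d0 x = D f x := by
    intro x
    by_cases hx : 2 * f ≤ x
    · rw [hfix x hx, D, if_pos hx]
    · push_neg at hx
      rcases Nat.even_or_odd x with ⟨k, hk⟩ | ⟨k, hk⟩
      · have hx' : x = 2 * k := by omega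
        rw [hx', he k (by omega), D]
        rw [if_neg (by omega), if_pos (by omega)]
        omega
      · rw [hk, ho k (by omega), D]
        rw [if_neg (by omega), if_neg (by omega)]
        omega
  refine ⟨?_, ?_, ?_⟩
  · rw [len]
    have hset : {p : ℕ × ℕ | p.1 < p.2 ∧ d0 p.2 < d0 p.1}
        = {p : ℕ × ℕ | p.1 < p.2 ∧ D f p.2 < D f p.1} := by
      simp only [hD]
    rw [hset, invF_set, Set.ncard_coe_finset, invF_card]
  · ext x
    rw [hD x, word4_eq, Q_eq f hf (f - 1) le_rfl x, gfun_top f hf x]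
  · rw [word4_eq, wordm, List.length_flatten, List.map_map]
    have : (List.length ∘ seg f) = fun j => 2 * (j + 1) := by
      funext j
      simp [seg]
    rw [this, sum_aux]
    have : f - 1 + 1 = f := by omega
    rw [this, Nat.mul_comm]
end
end

section
/- Let f ≥ 1 and let d ∈ D_f ⊆ S_{2f}. Then there exists w ∈ S_{2f} such that d_0 = d w and ℓ(d_0) = ℓ(d) + ℓ(w), where d_0 is the element of S_{2f} with (a)d_0 = (a+1)/2 for odd a and (a)d_0 = 2f+1-a/2 for even a. Equivalently, every element of D_f is ≤ d_0 in the weak right order on S_{2f}. -/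
/-!
STATEMENT 6.  0-based conventions in `Equiv.Perm ℕ`; length = #inversions.
`d_0 ∈ S_{2f}` is the permutation with `d0 (2k) = k` and
`d0 (2k+1) = 2f-1-k` for `k < f` (the 0-based version of the paper's
`(a)d_0 = (a+1)/2` for odd `a`, `(a)d_0 = 2f+1-a/2` for even `a`).
The paper's right-action product `d_0 = d w` is the function `w ∘ d`, i.e.
`w * d` in Mathlib's convention.  `D_f` is as in the paper (row standard
with increasing first column).
-/

noncomputable section

def InvSet (σ : Equiv.Perm ℕ) : Set (ℕ × ℕ) :=
  {p : ℕ × ℕ | p.1 < p.2 ∧ σ p.2 < σ p.1}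

lemma len_eq_ncard (σ : Equiv.Perm ℕ) : len σ = (InvSet σ).ncard := rfl

lemma maps_lt_s6 {σ : Equiv.Perm ℕ} {n : ℕ} (h : ∀ x, n ≤ x → σ x = x)
    {x : ℕ} (hx : x < n) : σ x < n := by
  by_contra hc
  push_neg at hc
  have h1 : σ (σ x) = σ x := h _ hc
  have h2 : σ x = x := σ.injective h1
  omega

lemma invset_finite {σ : Equiv.Perm ℕ} {n : ℕ} (h : ∀ x, n ≤ x → σ x = x) :
    (InvSet σ).Finite := by
  apply Set.Finite.subset (Set.finite_Iio n |>.prod (Set.finite_Iio n))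
  rintro ⟨i, j⟩ ⟨hij0, hinv0⟩
  have hij : i < j := hij0
  have hinv : σ j < σ i := hinv0
  simp only [Set.mem_prod, Set.mem_Iio]
  have hj : j < n := by
    by_contra hj
    push_neg at hj
    have hjj : σ j = j := h _ hj
    by_cases hi : i < n
    · have := maps_lt_s6 h hi
      omega
    · push_neg at hi
      have := h _ hi
      omega
  exact ⟨lt_trans hij hj, hj⟩

lemma len_add {n : ℕ} {d w : Equiv.Perm ℕ}
    (hd : ∀ x, n ≤ x → d x = x) (hw : ∀ x, n ≤ x → w x = x)
    (hC : ∀ i j, i < j → d j < d i → w (d j) < w (d i)) :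
    len (w * d) = len d + len w := by
  have hwd : ∀ x, n ≤ x → (w * d) x = x := by
    intro x hx
    simp [Equiv.Perm.mul_apply, hd x hx, hw x hx]
  set S : Set (ℕ × ℕ) :=
    {p : ℕ × ℕ | p.1 < p.2 ∧ d p.1 < d p.2 ∧ w (d p.2) < w (d p.1)} with hS
  have hfinwd : (InvSet (w * d)).Finite := invset_finite hwd
  have hfind : (InvSet d).Finite := invset_finite hd
  have hSsub : S ⊆ InvSet (w * d) := by
    rintro ⟨i, j⟩ ⟨h1, h2, h3⟩
    exact ⟨h1, h3⟩
  have hfinS : S.Finite := hfinwd.subset hSsub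
  have hunion : InvSet (w * d) = InvSet d ∪ S := by
    ext ⟨i, j⟩
    constructor
    · rintro ⟨h1, h2⟩
      simp only [Equiv.Perm.mul_apply] at h2
      rcases lt_trichotomy (d i) (d j) with h | h | h
      · exact Or.inr ⟨h1, h, h2⟩
      · exact absurd (d.injective h) (by omega)
      · exact Or.inl ⟨h1, h⟩
    · rintro (⟨h1, h2⟩ | ⟨h1, h2, h3⟩)
      · exact ⟨h1, by simpa using hC i j h1 h2⟩
      · exact ⟨h1, by simpa using h3⟩
  have hdisj : Disjoint (InvSet d) S := by
    rw [Set.disjoint_left]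
    rintro ⟨i, j⟩ ⟨h1, h2⟩ ⟨h1', h2', h3'⟩
    omega
  have himg : (fun p : ℕ × ℕ => (d p.1, d p.2)) '' S = InvSet w := by
    ext ⟨a, b⟩
    constructor
    · rintro ⟨⟨i, j⟩, ⟨h1, h2, h3⟩, heq⟩
      simp only [Prod.mk.injEq] at heq
      obtain ⟨ha, hb⟩ := heq
      subst ha; subst hb
      exact ⟨h2, h3⟩
    · rintro ⟨hab0, hw0⟩
      have hab : a < b := hab0
      have hw' : w b < w a := hw0
      refine ⟨(d⁻¹ a, d⁻¹ b), ⟨?_, ?_, ?_⟩, ?_⟩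
      · rcases lt_trichotomy (d⁻¹ a) (d⁻¹ b) with h | h | h
        · exact h
        · exfalso; have := congrArg d h; simp at this; omega
        · exfalso
          have := hC (d⁻¹ b) (d⁻¹ a) h (by simp; omega)
          simp at this
          omega
      · simp; omega
      · simp
        exact hw'
      · simp
  have hinj : Function.Injective (fun p : ℕ × ℕ => (d p.1, d p.2)) := by
    rintro ⟨a, b⟩ ⟨c, e⟩ h
    simp only [Prod.mk.injEq] at h
    exact Prod.ext (d.injective h.1) (d.injective h.2)
  have hcardS : S.ncard = (InvSet w).ncard := by
    rw [← himg, Set.ncard_image_of_injective _ hinj]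
  rw [len_eq_ncard, len_eq_ncard, len_eq_ncard, hunion,
    Set.ncard_union_eq hdisj hfind hfinS, hcardS]

lemma key {f : ℕ} {d d0 : Equiv.Perm ℕ} (hd : Df f d)
    (he : ∀ k, k < f → d0 (2 * k) = k)
    (ho : ∀ k, k < f → d0 (2 * k + 1) = 2 * f - 1 - k) :
    ∀ i j, i < j → d j < d i → d0 j < d0 i := by
  obtain ⟨h1, h2, h3⟩ := hd
  have mono : ∀ b, b < f → ∀ a, a ≤ b → d (2 * a) ≤ d (2 * b) := by
    intro b
    induction b with
    | zero =>
      intro _ a ha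
      have : a = 0 := by omega
      subst this
      exact le_rfl
    | succ b ih =>
      intro hb a ha
      rcases Nat.lt_or_ge a (b + 1) with h | h
      · have step : d (2 * b) < d (2 * (b + 1)) := by
          have h4 : d (2 * b) < d (2 * b + 2) := h3 b (by omega)
          have he2 : 2 * (b + 1) = 2 * b + 2 := by omega
          rw [he2]
          exact h4
        have := ih (by omega) a (by omega)
        omega
      · have : a = b + 1 := by omega
        subst this
        exact le_rfl
  intro i j hij hinv
  have hjf : j < 2 * f := by
    by_contra hj
    push_neg at hj
    have hjj : d j = j := h1 _ hj
    by_cases hi : i < 2 * f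
    · have := maps_lt_s6 h1 hi
      omega
    · push_neg at hi
      have := h1 _ hi
      omega
  have hif : i < 2 * f := by omega
  obtain ⟨a, ha | ha⟩ := Nat.even_or_odd' i <;> subst ha <;>
    obtain ⟨b, hb | hb⟩ := Nat.even_or_odd' j <;> subst hb
  · exfalso
    have hab : a < b := by omega
    have hbf : b < f := by omega
    have := mono b hbf a (by omega)
    omega
  · exfalso
    have hab : a ≤ b := by omega
    have hbf : b < f := by omega
    have hm := mono b hbf a hab
    have := h2 b hbf
    omega
  · have haf : a < f := by omega
    have hbf : b < f := by omega
    have hi0 : d0 (2 * a + 1) = 2 * f - 1 - a := ho a haf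
    have hj0 : d0 (2 * b) = b := he b hbf
    omega
  · have haf : a < f := by omega
    have hbf : b < f := by omega
    have hab : a < b := by omega
    have hi0 : d0 (2 * a + 1) = 2 * f - 1 - a := ho a haf
    have hj0 : d0 (2 * b + 1) = 2 * f - 1 - b := ho b hbf
    omega

theorem stmt6 (f : ℕ) (hf : 1 ≤ f) (d d0 : Equiv.Perm ℕ) (hd : Df f d)
    (hfix : ∀ x, 2 * f ≤ x → d0 x = x)
    (he : ∀ k, k < f → d0 (2 * k) = k)
    (ho : ∀ k, k < f → d0 (2 * k + 1) = 2 * f - 1 - k) :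
    ∃ w : Equiv.Perm ℕ, (∀ x, 2 * f ≤ x → w x = x) ∧ d0 = w * d ∧
      len d0 = len d + len w := by
  refine ⟨d0 * d⁻¹, ?_, ?_, ?_⟩
  · intro x hx
    have hdx : d x = x := hd.1 x hx
    have hdinv : d⁻¹ x = x := by
      conv_lhs => rw [← hdx]
      exact d.symm_apply_apply x
    simp [Equiv.Perm.mul_apply, hdinv, hfix x hx]
  · group
  · have hw : ∀ x, 2 * f ≤ x → (d0 * d⁻¹) x = x := by
      intro x hx
      have hdx : d x = x := hd.1 x hx
      have hdinv : d⁻¹ x = x := by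
        conv_lhs => rw [← hdx]
        exact d.symm_apply_apply x
      simp [Equiv.Perm.mul_apply, hdinv, hfix x hx]
    have hC : ∀ i j, i < j → d j < d i →
        (d0 * d⁻¹) (d j) < (d0 * d⁻¹) (d i) := by
      intro i j hij hinv
      simp only [Equiv.Perm.mul_apply, Equiv.Perm.inv_def, Equiv.symm_apply_apply]
      exact key hd he ho i j hij hinv
    have := len_add hd.1 hw hC
    have heq : (d0 * d⁻¹) * d = d0 := by group
    rw [heq] at this
    exact this
end
end

section
/- For any integers m ≥ 1, n ≥ 0, c ∈ Z, t ≥ 0 and any weight λ in the set X_n of weights of V^{⊗n} (so ⟨λ, α_i^∨⟩ ∈ {-n,...,n} for i < m and ⟨λ, α_m^∨⟩ ∈ {-2n,-2n+2,...,2n}), the element p'_λ := (∏_{i=1}^{m-1} [K_i; -λ̂_i-1 choose 2n][K_i; -λ̂_i+2n choose 2n]) · ([K_m; -λ̂_m-1 choose 4n][K_m; -λ̂_m+4n choose 4n]), where λ̂_i := ⟨λ, α_i^∨⟩, lies in the Lusztig integral form U_A of the quantized enveloping algebra of sp_{2m} and acts on V^{⊗n} as the projection onto the λ-weight space: p'_λ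 x = x for x in the λ-weight space and p'_λ x = 0 for x in any μ-weight space with μ ≠ λ. -/
/-!
STATEMENT 12.  We work in the field `ℚ(q) = RatFunc ℚ` with `q = X`, and
`A = ℤ[q,q⁻¹]` is the subring generated by `q, q⁻¹`.  A weight `λ` of
`sp_{2m}` is recorded through its pairing vector
`λ̂ = (⟨λ,α_1^∨⟩,…,⟨λ,α_m^∨⟩) : Fin m → ℤ`; membership in `X_n` is the
stated bound: `λ̂_i ∈ {-n,…,n}` for `i < m` and
`λ̂_m ∈ {-2n,-2n+2,…,2n}`.  On a vector of weight `μ`, `k̃_i` acts by the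
scalar `q_i^{μ̂_i}` (`q_i = q` for `i < m`, `q_m = q²`), so the Lusztig
element `[K_i; c, t] = ∏_{s=1}^t (k̃_i q_i^{c-s+1} - k̃_i⁻¹ q_i^{-c+s-1}) /
(q_i^s - q_i^{-s})` acts by the scalar `gauss q_i μ̂_i c t`, and
`p'_λ = (∏_{i<m} [K_i;-λ̂_i-1,2n][K_i;-λ̂_i+2n,2n]) ·
[K_m;-λ̂_m-1,4n][K_m;-λ̂_m+4n,4n]` acts on the `μ`-weight space by
`Pproj m n λ̂ μ̂`.  The claims: (a) each Gaussian-binomial scalar lies in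
`A` (which is the content of `[K_i;c,t] ∈ U_A`, so `p'_λ ∈ U_A`), and
(b) `p'_λ` acts as the projection onto the `λ`-weight space: its scalar on
a `μ`-weight vector is `1` if `μ = λ` and `0` otherwise.
-/

noncomputable section

abbrev Fq := RatFunc ℚ

def qF : Fq := RatFunc.X

/-- `A = ℤ[q, q⁻¹]` inside `ℚ(q)`. -/
def Asub : Subring Fq := Subring.closure {qF, qF⁻¹}

/-- The scalar by which `[K; c, t]` (built from `u = q_i`) acts on a vector
on which `k̃` acts by `u^e`. -/
def gauss (u : Fq) (e c : ℤ) (t : ℕ) : Fq :=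
  ∏ s ∈ Finset.range t,
    (u ^ (e + c - (s : ℤ)) - u ^ (-(e + c - (s : ℤ)))) /
      (u ^ ((s : ℤ) + 1) - u ^ (-((s : ℤ) + 1)))

/-- Membership of a weight (through its pairing vector) in the set `X_n` of
weights of `V^{⊗n}`, as described in the statement. -/
def inXn (m n : ℕ) (lam : Fin m → ℤ) : Prop :=
  ∀ i : Fin m,
    ((i : ℕ) + 1 < m → -(n : ℤ) ≤ lam i ∧ lam i ≤ (n : ℤ)) ∧
    ((i : ℕ) + 1 = m →
      (∃ kk : ℤ, lam i = 2 * kk) ∧ -(2 * (n : ℤ)) ≤ lam i ∧ lam i ≤ 2 * (n : ℤ))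

/-- The scalar by which `p'_λ` acts on the `μ`-weight space. -/
def Pproj (m n : ℕ) (lam mu : Fin m → ℤ) : Fq :=
  ∏ i : Fin m,
    if (i : ℕ) + 1 < m then
      gauss qF (mu i) (-(lam i) - 1) (2 * n) *
        gauss qF (mu i) (-(lam i) + 2 * (n : ℤ)) (2 * n)
    else
      gauss (qF ^ 2) (mu i) (-(lam i) - 1) (4 * n) *
        gauss (qF ^ 2) (mu i) (-(lam i) + 4 * (n : ℤ)) (4 * n)

/-- one-variable version -/
def gA (u : Fq) (a : ℤ) (t : ℕ) : Fq :=
  ∏ s ∈ Finset.range t,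
    (u ^ (a - (s : ℤ)) - u ^ (-(a - (s : ℤ)))) /
      (u ^ ((s : ℤ) + 1) - u ^ (-((s : ℤ) + 1)))

lemma gauss_eq (u : Fq) (e c : ℤ) (t : ℕ) : gauss u e c t = gA u (e + c) t := rfl

def Nn (u : Fq) (a : ℤ) (t : ℕ) : Fq :=
  ∏ s ∈ Finset.range t, (u ^ (a - (s : ℤ)) - u ^ (-(a - (s : ℤ))))

def Dd (u : Fq) (t : ℕ) : Fq :=
  ∏ s ∈ Finset.range t, (u ^ ((s : ℤ) + 1) - u ^ (-((s : ℤ) + 1)))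

lemma gA_eq_div (u : Fq) (a : ℤ) (t : ℕ) : gA u a t = Nn u a t / Dd u t := by
  simp [gA, Nn, Dd, Finset.prod_div_distrib]

variable {u : Fq}

lemma hq0 : qF ≠ 0 := by
  simpa [qF] using RatFunc.X_ne_zero (K := ℚ)

lemma hq_pow (k : ℕ) (h : qF ^ k = 1) : k = 0 := by
  have : algebraMap (Polynomial ℚ) Fq (Polynomial.X ^ k) = algebraMap (Polynomial ℚ) Fq 1 := by
    simpa [qF, map_pow, RatFunc.algebraMap_X] using h
  have hX : (Polynomial.X : Polynomial ℚ) ^ k = 1 := RatFunc.algebraMap_injective ℚ this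
  have := congrArg Polynomial.natDegree hX
  simpa [Polynomial.natDegree_X_pow] using this

lemma hq_zpow (k : ℤ) (h : qF ^ k = 1) : k = 0 := by
  rcases le_or_gt 0 k with hk | hk
  · lift k to ℕ using hk
    rw [zpow_natCast] at h
    exact_mod_cast hq_pow _ h
  · exfalso
    have h' : qF ^ (-k) = 1 := by rw [zpow_neg, h, inv_one]
    lift (-k) to ℕ using (by omega : (0:ℤ) ≤ -k) with k' hk'
    rw [zpow_natCast] at h'
    have := hq_pow _ h'
    omega

section withU
variable (hu0 : u ≠ 0) (hu : ∀ k : ℤ, u ^ k = 1 → k = 0)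

include hu0 hu in
lemma hd_ne (s : ℕ) : u ^ ((s : ℤ) + 1) - u ^ (-((s : ℤ) + 1)) ≠ 0 := by
  intro h
  have h1 : u ^ ((s : ℤ) + 1) = u ^ (-((s : ℤ) + 1)) := sub_eq_zero.mp h
  have h2 : u ^ (2 * ((s : ℤ) + 1)) = 1 := by
    rw [two_mul, zpow_add₀ hu0]
    nth_rewrite 2 [h1]
    rw [← zpow_add₀ hu0, show (s : ℤ) + 1 + -((s : ℤ) + 1) = 0 by ring, zpow_zero]
  have := hu _ h2
  omega

include hu0 hu in
lemma hD_ne (t : ℕ) : Dd u t ≠ 0 :=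
  Finset.prod_ne_zero_iff.mpr fun s _ => hd_ne hu0 hu s

lemma gA_zero (a : ℤ) (t : ℕ) (h0 : 0 ≤ a) (h1 : a < t) : gA u a t = 0 := by
  apply Finset.prod_eq_zero (i := a.toNat)
  · simp only [Finset.mem_range]; omega
  · have : a - (a.toNat : ℤ) = 0 := by omega
    rw [this]
    simp

lemma Nn_reflect (a : ℤ) (t : ℕ) : Nn u a t = (-1) ^ t * Nn u ((t : ℤ) - 1 - a) t := by
  calc Nn u a t
      = ∏ j ∈ Finset.range t,
          (fun s : ℕ => u ^ (a - (s : ℤ)) - u ^ (-(a - (s : ℤ)))) (t - 1 - j) :=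
        (Finset.prod_range_reflect _ t).symm
    _ = ∏ j ∈ Finset.range t,
          -(u ^ (((t : ℤ) - 1 - a) - (j : ℤ)) - u ^ (-(((t : ℤ) - 1 - a) - (j : ℤ)))) := by
        refine Finset.prod_congr rfl fun j hj => ?_
        have hj' : j < t := Finset.mem_range.mp hj
        simp only
        have hc : ((t - 1 - j : ℕ) : ℤ) = (t : ℤ) - 1 - (j : ℤ) := by omega
        rw [hc]
        have e1 : a - ((t : ℤ) - 1 - j) = -(((t : ℤ) - 1 - a) - j) := by ring
        rw [e1]
        ring
    _ = (-1) ^ t * Nn u ((t : ℤ) - 1 - a) t := by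
        rw [Finset.prod_congr rfl
          (fun j (_ : j ∈ Finset.range t) => (neg_one_mul
            (u ^ (((t : ℤ) - 1 - a) - (j : ℤ)) - u ^ (-(((t : ℤ) - 1 - a) - (j : ℤ))))).symm),
          Finset.prod_mul_distrib, Finset.prod_const, Finset.card_range]
        rfl

include hu0 hu in
lemma gA_diag (t : ℕ) : gA u (t : ℤ) t = 1 := by
  rw [gA_eq_div]
  have hN : Nn u (t : ℤ) t = Dd u t := by
    unfold Nn Dd
    rw [← Finset.prod_range_reflect
      (fun s => u ^ ((s : ℤ) + 1) - u ^ (-((s : ℤ) + 1))) t]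
    refine Finset.prod_congr rfl fun j hj => ?_
    have hj' : j < t := Finset.mem_range.mp hj
    have hc : ((t - 1 - j : ℕ) : ℤ) + 1 = (t : ℤ) - j := by omega
    rw [hc]
  rw [hN, div_self (hD_ne hu0 hu t)]

include hu0 hu in
lemma gA_neg_one (t : ℕ) : gA u (-1) t = (-1) ^ t := by
  rw [gA_eq_div, Nn_reflect, show (t : ℤ) - 1 - (-1) = (t : ℤ) by ring, mul_div_assoc,
    ← gA_eq_div, gA_diag hu0 hu, mul_one]

end withU

lemma gA_reflect (a : ℤ) (t : ℕ) : gA u a t = (-1) ^ t * gA u ((t : ℤ) - 1 - a) t := by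
  rw [gA_eq_div, gA_eq_div, Nn_reflect, mul_div_assoc]

section withU2
variable (hu0 : u ≠ 0) (hu : ∀ k : ℤ, u ^ k = 1 → k = 0)

include hu0 hu in
lemma gA_rec (a : ℤ) (t : ℕ) :
    gA u a (t + 1) = u ^ ((t : ℤ) + 1) * gA u (a - 1) (t + 1) +
      u ^ (((t : ℤ) + 1) - a) * gA u (a - 1) t := by
  have key : ∀ x y : ℤ, u ^ x * u ^ y = u ^ (x + y) := fun x y => (zpow_add₀ hu0 x y).symm
  set d : Fq := u ^ ((t : ℤ) + 1) - u ^ (-((t : ℤ) + 1)) with hdef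
  have hd : d ≠ 0 := hd_ne hu0 hu t
  have NA : Nn u a (t + 1) = (u ^ a - u ^ (-a)) * Nn u (a - 1) t := by
    unfold Nn
    rw [Finset.prod_range_succ' (fun s : ℕ => u ^ (a - (s : ℤ)) - u ^ (-(a - (s : ℤ)))) t]
    rw [mul_comm]
    congr 1
    · norm_num
    · refine Finset.prod_congr rfl fun j _ => ?_
      have h1 : a - ((j : ℤ) + 1) = (a - 1) - (j : ℤ) := by ring
      push_cast
      rw [h1]
  have NB : Nn u (a - 1) (t + 1) = Nn u (a - 1) t * (u ^ (a - 1 - (t : ℤ)) - u ^ (-(a - 1 - (t : ℤ)))) := by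
    unfold Nn
    rw [Finset.prod_range_succ]
  have DB : Dd u (t + 1) = Dd u t * d := by
    unfold Dd
    rw [Finset.prod_range_succ, hdef]
  rw [gA_eq_div, gA_eq_div, gA_eq_div, NA, NB, DB]
  have h3 : u ^ (((t : ℤ) + 1) - a) * (Nn u (a - 1) t / Dd u t) =
      (u ^ (((t : ℤ) + 1) - a) * Nn u (a - 1) t * d) / (Dd u t * d) := by
    rw [mul_div_mul_right _ _ hd, mul_div_assoc]
  rw [h3, ← mul_div_assoc, ← add_div]
  congr 1
  have e1 : u ^ ((t : ℤ) + 1) * u ^ (a - 1 - (t : ℤ)) = u ^ a := by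
    rw [key, show ((t : ℤ) + 1) + (a - 1 - (t : ℤ)) = a by ring]
  have e2 : u ^ ((t : ℤ) + 1) * u ^ (-(a - 1 - (t : ℤ))) = u ^ (2 * (t : ℤ) + 2 - a) := by
    rw [key, show ((t : ℤ) + 1) + -(a - 1 - (t : ℤ)) = 2 * (t : ℤ) + 2 - a by ring]
  have e3 : u ^ (((t : ℤ) + 1) - a) * u ^ ((t : ℤ) + 1) = u ^ (2 * (t : ℤ) + 2 - a) := by
    rw [key, show (((t : ℤ) + 1) - a) + ((t : ℤ) + 1) = 2 * (t : ℤ) + 2 - a by ring]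
  have e4 : u ^ (((t : ℤ) + 1) - a) * u ^ (-((t : ℤ) + 1)) = u ^ (-a) := by
    rw [key, show (((t : ℤ) + 1) - a) + -((t : ℤ) + 1) = -a by ring]
  rw [hdef]
  linear_combination -(Nn u (a - 1) t) * e1 + (Nn u (a - 1) t) * e2 -
    (Nn u (a - 1) t) * e3 + (Nn u (a - 1) t) * e4

variable (hm : u ∈ Asub) (hm' : u⁻¹ ∈ Asub)

include hm hm' in
lemma zpow_mem_Asub (z : ℤ) : u ^ z ∈ Asub := by
  cases z with
  | ofNat k => rw [Int.ofNat_eq_coe, zpow_natCast]; exact pow_mem hm k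
  | negSucc k => rw [zpow_negSucc, ← inv_pow]; exact pow_mem hm' _

include hu0 hu hm hm' in
lemma gA_mem_nat : ∀ (k t : ℕ), gA u (k : ℤ) t ∈ Asub := by
  intro k
  induction k with
  | zero =>
    intro t
    cases t with
    | zero => simpa [gA] using one_mem Asub
    | succ t' =>
      rw [Nat.cast_zero, gA_zero _ _ le_rfl (by exact_mod_cast Nat.succ_pos t')]
      exact zero_mem _
  | succ k ih =>
    intro t
    cases t with
    | zero => simpa [gA] using one_mem Asub
    | succ t' =>
      have hcast : ((k + 1 : ℕ) : ℤ) = (k : ℤ) + 1 := by push_cast; ring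
      rw [hcast, gA_rec hu0 hu, show (k : ℤ) + 1 - 1 = (k : ℤ) by ring]
      exact add_mem (mul_mem (zpow_mem_Asub hm hm' _) (ih _))
        (mul_mem (zpow_mem_Asub hm hm' _) (ih _))

include hu0 hu hm hm' in
lemma gA_mem (a : ℤ) (t : ℕ) : gA u a t ∈ Asub := by
  rcases le_or_gt 0 a with h | h
  · lift a to ℕ using h
    exact gA_mem_nat hu0 hu hm hm' a t
  · rw [gA_reflect]
    have h2 : (0 : ℤ) ≤ (t : ℤ) - 1 - a := by omega
    have := gA_mem_nat hu0 hu hm hm' ((t : ℤ) - 1 - a).toNat t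
    rw [Int.toNat_of_nonneg h2] at this
    exact mul_mem (pow_mem (neg_mem (one_mem _)) t) this

end withU2

lemma hmem_q : qF ∈ Asub := Subring.subset_closure (Set.mem_insert _ _)
lemma hmem_qi : qF⁻¹ ∈ Asub := Subring.subset_closure (Set.mem_insert_of_mem _ rfl)

lemma hq2_0 : (qF ^ 2 : Fq) ≠ 0 := pow_ne_zero 2 hq0

lemma hq2_zpow (k : ℤ) (h : (qF ^ 2 : Fq) ^ k = 1) : k = 0 := by
  rw [← zpow_natCast qF 2, ← zpow_mul] at h
  have := hq_zpow _ h
  omega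

lemma hmem_q2 : (qF ^ 2 : Fq) ∈ Asub := pow_mem hmem_q 2
lemma hmem_q2i : (qF ^ 2 : Fq)⁻¹ ∈ Asub := by
  rw [← inv_pow]; exact pow_mem hmem_qi 2


theorem stmt12 (m n : ℕ) (hm : 1 ≤ m) (lam mu : Fin m → ℤ)
    (hlam : inXn m n lam) (hmu : inXn m n mu) :
    -- integrality: [K_i; c, t] ∈ U_A (at the level of weight-space scalars),
    -- hence p'_λ ∈ U_A
    (∀ (e c : ℤ) (t : ℕ), gauss qF e c t ∈ Asub ∧ gauss (qF ^ 2) e c t ∈ Asub) ∧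
    -- p'_λ acts as the projection onto the λ-weight space
    Pproj m n lam mu = (if mu = lam then 1 else 0) := by
  constructor
  · intro e c t
    exact ⟨by rw [gauss_eq]; exact gA_mem hq0 hq_zpow hmem_q hmem_qi _ t,
      by rw [gauss_eq]; exact gA_mem hq2_0 hq2_zpow hmem_q2 hmem_q2i _ t⟩
  · by_cases h : mu = lam
    · subst h
      rw [if_pos rfl]
      unfold Pproj
      apply Finset.prod_eq_one
      intro i _
      split_ifs with hi
      · rw [gauss_eq, gauss_eq,
          show mu i + (-(mu i) - 1) = -1 by ring,
          show mu i + (-(mu i) + 2 * (n : ℤ)) = ((2 * n : ℕ) : ℤ) by push_cast; ring,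
          gA_neg_one hq0 hq_zpow, gA_diag hq0 hq_zpow, mul_one, pow_mul]
        norm_num
      · rw [gauss_eq, gauss_eq,
          show mu i + (-(mu i) - 1) = -1 by ring,
          show mu i + (-(mu i) + 4 * (n : ℤ)) = ((4 * n : ℕ) : ℤ) by push_cast; ring,
          gA_neg_one hq2_0 hq2_zpow, gA_diag hq2_0 hq2_zpow, mul_one, pow_mul]
        norm_num
    · rw [if_neg h]
      obtain ⟨i₀, hi₀⟩ := Function.ne_iff.mp h
      unfold Pproj
      apply Finset.prod_eq_zero (Finset.mem_univ i₀)
      split_ifs with hi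
      · obtain ⟨hl1, hl2⟩ := (hlam i₀).1 hi
        obtain ⟨hm1, hm2⟩ := (hmu i₀).1 hi
        rcases lt_or_gt_of_ne (sub_ne_zero.mpr hi₀) with hd | hd
        · -- mu i₀ < lam i₀ : second factor zero
          rw [gauss_eq (c := -(lam i₀) + 2 * (n : ℤ)),
            gA_zero _ _ (by omega) (by push_cast; omega), mul_zero]
        · rw [gauss_eq (c := -(lam i₀) - 1),
            gA_zero _ _ (by omega) (by push_cast; omega), zero_mul]
      · have hieq : (i₀ : ℕ) + 1 = m := by omega
        obtain ⟨-, hl1, hl2⟩ := (hlam i₀).2 hieq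
        obtain ⟨-, hm1, hm2⟩ := (hmu i₀).2 hieq
        rcases lt_or_gt_of_ne (sub_ne_zero.mpr hi₀) with hd | hd
        · rw [gauss_eq (c := -(lam i₀) + 4 * (n : ℤ)),
            gA_zero _ _ (by omega) (by push_cast; omega), mul_zero]
        · rw [gauss_eq (c := -(lam i₀) - 1),
            gA_zero _ _ (by omega) (by push_cast; omega), zero_mul]
end
end

section
/- Let V be a 2m-dimensional vector space with basis v_1,...,v_{2m} over a field K, and for a multi-index i = (i_1,...,i_n) ∈ {1,...,2m}^n define the symplectic length ℓ_s(i) as the maximal number of pairwise disjoint pairs (s,t) with 1 ≤ s < t ≤ n and i_s = 2m+1-i_t. Then in the right BMW action on V^{⊗n}, the operator γ'_k (the image of E_k) annihilates the simple tensor v_i whenever i_k ≠ 2m+1-i_{k+1}; consequently, if f > ℓ_s(i), then v_i (E_1 E_3 ··· E_{2f-1}) = 0, and more generally the two-sided ideal B^{(f)} of B_n(-ζ^{2m+1}, ζ) generated by E_1E_3···E_{2f-1} annihilates v_i. -/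
/-!
STATEMENT 16.  `K` is a field and `ζ` (the image of `q`, nonzero) the
parameter.  `V^{⊗n}` is realised through its basis of simple tensors
`v_idx`, `idx : Fin n → Fin (2m)` (0-based; the paper's `i' = 2m+1-i` is
`Fin.rev`), simple tensors being indicator functions `Pi.single idx 1`,
with the right BMW action given by `Matrix.vecMul`: `E_{k+1}` acts as
`gopK … k` (the operator `γ'` in slots `k, k+1`) and `T_{k+1}` as
`bopK … k`.  `hasPairs m n f idx` says `idx` contains `f` pairwise disjoint
symplectic pairs, so `f > ℓ_s(idx)` is `¬ hasPairs m n f idx`.  The image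
of the BMW algebra is the subring of the matrix algebra generated by all
the `bopK`/`gopK`, and the image of the two-sided ideal `B^{(f)}` consists
of sums of elements `u * (E_1 E_3 ⋯ E_{2f-1}) * w` with `u, w` in that
subring; annihilation of each such element is asserted.
-/

noncomputable section
open Matrix
open scoped Classical

def rho (m : ℕ) (i : Fin (2 * m)) : ℤ :=
  if (i : ℕ) < m then (m : ℤ) - (i : ℕ) else (m : ℤ) - (i : ℕ) - 1

def eps (m : ℕ) (i : Fin (2 * m)) : ℤ := if (i : ℕ) < m then 1 else -1

def tmK (K : Type*) [Field K] (m : ℕ) (i j k l : Fin (2 * m)) :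
    Matrix (Fin (2 * m) × Fin (2 * m)) (Fin (2 * m) × Fin (2 * m)) K :=
  Matrix.single (i, k) (j, l) 1

def betaMatK (K : Type*) [Field K] (m : ℕ) (ζ : K) :
    Matrix (Fin (2 * m) × Fin (2 * m)) (Fin (2 * m) × Fin (2 * m)) K :=
  (∑ i, (ζ • tmK K m i i i i + ζ⁻¹ • tmK K m i i.rev i.rev i))
  + (∑ i, ∑ j, if i ≠ j ∧ i ≠ j.rev then tmK K m i j j i else 0)
  + (ζ - ζ⁻¹) •
      (∑ i, ∑ j, if i < j then
          tmK K m i i j j -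
            (((eps m i * eps m j : ℤ) : K) * ζ ^ (rho m j - rho m i)) •
              tmK K m i j.rev i.rev j
        else 0)

def gammaMatK (K : Type*) [Field K] (m : ℕ) (ζ : K) :
    Matrix (Fin (2 * m) × Fin (2 * m)) (Fin (2 * m) × Fin (2 * m)) K :=
  ∑ i, ∑ j,
    (((eps m i * eps m j : ℤ) : K) * ζ ^ (rho m j - rho m i)) •
      tmK K m i j.rev i.rev j

def liftOpK (K : Type*) [Field K] (m n : ℕ) (k l : Fin n)
    (M : Matrix (Fin (2 * m) × Fin (2 * m)) (Fin (2 * m) × Fin (2 * m)) K) :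
    Matrix (Fin n → Fin (2 * m)) (Fin n → Fin (2 * m)) K :=
  fun g h =>
    if ∀ j, j ≠ k → j ≠ l → g j = h j then M (g k, g l) (h k, h l) else 0

def bopK (K : Type*) [Field K] (m n : ℕ) (ζ : K) (i : ℕ) :
    Matrix (Fin n → Fin (2 * m)) (Fin n → Fin (2 * m)) K :=
  if h : i + 1 < n then
    liftOpK K m n ⟨i, by omega⟩ ⟨i + 1, h⟩ (betaMatK K m ζ) else 1

def gopK (K : Type*) [Field K] (m n : ℕ) (ζ : K) (i : ℕ) :
    Matrix (Fin n → Fin (2 * m)) (Fin n → Fin (2 * m)) K :=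
  if h : i + 1 < n then
    liftOpK K m n ⟨i, by omega⟩ ⟨i + 1, h⟩ (gammaMatK K m ζ) else 1

/-- `idx` contains `f` pairwise disjoint symplectic pairs. -/
def hasPairs (m n f : ℕ) (idx : Fin n → Fin (2 * m)) : Prop :=
  ∃ P : Fin f → Fin n × Fin n,
    (∀ a, (P a).1 < (P a).2 ∧ idx (P a).1 = Fin.rev (idx (P a).2)) ∧
    (∀ a b, a ≠ b →
      (P a).1 ≠ (P b).1 ∧ (P a).1 ≠ (P b).2 ∧
      (P a).2 ≠ (P b).1 ∧ (P a).2 ≠ (P b).2)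

/-- The generating operators of the image of the BMW algebra. -/
def BMWops (K : Type*) [Field K] (m n : ℕ) (ζ : K) :
    Set (Matrix (Fin n → Fin (2 * m)) (Fin n → Fin (2 * m)) K) :=
  {M | ∃ k, k + 1 < n ∧ (M = bopK K m n ζ k ∨ M = gopK K m n ζ k)}

section Aux

variable {K : Type*} [Field K] {m n : ℕ}

/-! ### Entry support lemmas -/

lemma gammaMatK_zero (ζ : K) (a b c d : Fin (2 * m))
    (h : ¬ (b = a.rev ∧ c = d.rev)) : gammaMatK K m ζ (a, b) (c, d) = 0 := by
  unfold gammaMatK tmK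
  rw [Matrix.sum_apply]
  refine Finset.sum_eq_zero fun i _ => ?_
  rw [Matrix.sum_apply]
  refine Finset.sum_eq_zero fun j _ => ?_
  rw [Matrix.smul_apply]
  have : Matrix.single ((i, i.rev)) ((j.rev, j)) (1 : K) (a, b) (c, d) = 0 := by
    simp only [Matrix.single, Matrix.of_apply, Prod.mk.injEq]
    split_ifs with hif
    · obtain ⟨⟨h1, h2⟩, h3, h4⟩ := hif
      exact absurd ⟨by rw [← h2, h1], by rw [← h3, h4]⟩ h
    · rfl
  rw [this, smul_zero]

lemma betaMatK_zero (ζ : K) (a b c d : Fin (2 * m))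
    (h : ¬ ((c = a ∧ d = b) ∨ (c = b ∧ d = a) ∨ (b = a.rev ∧ d = c.rev))) :
    betaMatK K m ζ (a, b) (c, d) = 0 := by
  have h1 : ¬ (c = a ∧ d = b) := fun hx => h (Or.inl hx)
  have h2 : ¬ (c = b ∧ d = a) := fun hx => h (Or.inr (Or.inl hx))
  have h3 : ¬ (b = a.rev ∧ d = c.rev) := fun hx => h (Or.inr (Or.inr hx))
  unfold betaMatK tmK
  rw [Matrix.add_apply, Matrix.add_apply, Matrix.smul_apply]
  have hz1 : (∑ i : Fin (2 * m), (ζ • Matrix.single ((i, i)) ((i, i)) (1 : K)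
      + ζ⁻¹ • Matrix.single ((i, i.rev)) ((i.rev, i)) (1 : K))) (a, b) (c, d) = 0 := by
    rw [Matrix.sum_apply]
    refine Finset.sum_eq_zero fun i _ => ?_
    rw [Matrix.add_apply, Matrix.smul_apply, Matrix.smul_apply]
    have t1 : Matrix.single ((i, i)) ((i, i)) (1 : K) (a, b) (c, d) = 0 := by
      simp only [Matrix.single, Matrix.of_apply, Prod.mk.injEq]
      split_ifs with hif
      · obtain ⟨⟨e1, e2⟩, e3, e4⟩ := hif
        exact absurd ⟨by rw [← e3, e1], by rw [← e4, e2]⟩ h1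
      · rfl
    have t2 : Matrix.single ((i, i.rev)) ((i.rev, i)) (1 : K) (a, b) (c, d) = 0 := by
      simp only [Matrix.single, Matrix.of_apply, Prod.mk.injEq]
      split_ifs with hif
      · obtain ⟨⟨e1, e2⟩, e3, e4⟩ := hif
        refine absurd ⟨by rw [← e2, e1], ?_⟩ h3
        rw [← e4, ← e3, Fin.rev_rev]
      · rfl
    rw [t1, t2, smul_zero, smul_zero, add_zero]
  have hz2 : (∑ i : Fin (2 * m), ∑ j : Fin (2 * m), if i ≠ j ∧ i ≠ j.rev then
      Matrix.single ((i, j)) ((j, i)) (1 : K) else 0) (a, b) (c, d) = 0 := by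
    rw [Matrix.sum_apply]
    refine Finset.sum_eq_zero fun i _ => ?_
    rw [Matrix.sum_apply]
    refine Finset.sum_eq_zero fun j _ => ?_
    rw [apply_ite (fun M : Matrix (Fin (2 * m) × Fin (2 * m)) (Fin (2 * m) × Fin (2 * m)) K
      => M (a, b) (c, d))]
    have t1 : Matrix.single ((i, j)) ((j, i)) (1 : K) (a, b) (c, d) = 0 := by
      simp only [Matrix.single, Matrix.of_apply, Prod.mk.injEq]
      split_ifs with hif
      · obtain ⟨⟨e1, e2⟩, e3, e4⟩ := hif
        exact absurd ⟨by rw [← e3, e2], by rw [← e4, e1]⟩ h2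
      · rfl
    rw [t1]
    simp only [Matrix.zero_apply, ite_self]
  have hz3 : (∑ i : Fin (2 * m), ∑ j : Fin (2 * m), if i < j then
      Matrix.single ((i, j)) ((i, j)) (1 : K) -
        (((eps m i * eps m j : ℤ) : K) * ζ ^ (rho m j - rho m i)) •
          Matrix.single ((i, i.rev)) ((j.rev, j)) (1 : K)
      else 0) (a, b) (c, d) = 0 := by
    rw [Matrix.sum_apply]
    refine Finset.sum_eq_zero fun i _ => ?_
    rw [Matrix.sum_apply]
    refine Finset.sum_eq_zero fun j _ => ?_
    rw [apply_ite (fun M : Matrix (Fin (2 * m) × Fin (2 * m)) (Fin (2 * m) × Fin (2 * m)) K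
      => M (a, b) (c, d))]
    have t1 : Matrix.single ((i, j)) ((i, j)) (1 : K) (a, b) (c, d) = 0 := by
      simp only [Matrix.single, Matrix.of_apply, Prod.mk.injEq]
      split_ifs with hif
      · obtain ⟨⟨e1, e2⟩, e3, e4⟩ := hif
        exact absurd ⟨by rw [← e3, e1], by rw [← e4, e2]⟩ h1
      · rfl
    have t2 : Matrix.single ((i, i.rev)) ((j.rev, j)) (1 : K) (a, b) (c, d) = 0 := by
      simp only [Matrix.single, Matrix.of_apply, Prod.mk.injEq]
      split_ifs with hif
      · obtain ⟨⟨e1, e2⟩, e3, e4⟩ := hif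
        refine absurd ⟨by rw [← e2, e1], by rw [← e4, ← e3, Fin.rev_rev]⟩ h3
      · rfl
    rw [Matrix.sub_apply, Matrix.smul_apply, t1, t2, smul_zero, sub_zero]
    simp only [Matrix.zero_apply, ite_self]
  rw [hz1, hz2, hz3, smul_zero, add_zero, add_zero]

lemma gopK_support (ζ : K) (k : ℕ) (hk : k + 1 < n)
    (g h : Fin n → Fin (2 * m))
    (hne : gopK K m n ζ k g h ≠ 0) :
    g ⟨k, by omega⟩ = Fin.rev (g ⟨k + 1, hk⟩) ∧
    h ⟨k, by omega⟩ = Fin.rev (h ⟨k + 1, hk⟩) ∧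
    ∀ j, j ≠ (⟨k, by omega⟩ : Fin n) → j ≠ ⟨k + 1, hk⟩ → h j = g j := by
  rw [gopK, dif_pos hk, liftOpK] at hne
  split_ifs at hne with hag
  · have hcond : g ⟨k + 1, hk⟩ = (g ⟨k, by omega⟩).rev ∧
        h ⟨k, by omega⟩ = (h ⟨k + 1, hk⟩).rev := by
      by_contra hc
      exact hne (gammaMatK_zero ζ _ _ _ _ hc)
    refine ⟨by rw [hcond.1, Fin.rev_rev], hcond.2, fun j hj1 hj2 => (hag j hj1 hj2).symm⟩
  · exact absurd rfl hne

lemma bopK_support (ζ : K) (k : ℕ) (hk : k + 1 < n)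
    (g h : Fin n → Fin (2 * m))
    (hne : bopK K m n ζ k g h ≠ 0) :
    (∀ j, j ≠ (⟨k, by omega⟩ : Fin n) → j ≠ ⟨k + 1, hk⟩ → h j = g j) ∧
    ((h ⟨k, by omega⟩ = g ⟨k, by omega⟩ ∧ h ⟨k + 1, hk⟩ = g ⟨k + 1, hk⟩) ∨
     (h ⟨k, by omega⟩ = g ⟨k + 1, hk⟩ ∧ h ⟨k + 1, hk⟩ = g ⟨k, by omega⟩) ∨
     (g ⟨k, by omega⟩ = Fin.rev (g ⟨k + 1, hk⟩) ∧
      h ⟨k, by omega⟩ = Fin.rev (h ⟨k + 1, hk⟩))) := by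
  rw [bopK, dif_pos hk, liftOpK] at hne
  split_ifs at hne with hag
  · refine ⟨fun j hj1 hj2 => (hag j hj1 hj2).symm, ?_⟩
    have hcond : (h ⟨k, by omega⟩ = g ⟨k, by omega⟩ ∧ h ⟨k + 1, hk⟩ = g ⟨k + 1, hk⟩) ∨
        (h ⟨k, by omega⟩ = g ⟨k + 1, hk⟩ ∧ h ⟨k + 1, hk⟩ = g ⟨k, by omega⟩) ∨
        (g ⟨k + 1, hk⟩ = (g ⟨k, by omega⟩).rev ∧ h ⟨k + 1, hk⟩ = (h ⟨k, by omega⟩).rev) := by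
      by_contra hc
      push_neg at hc
      exact hne (betaMatK_zero ζ _ _ _ _ (by tauto))
    rcases hcond with hc | hc | hc
    · exact Or.inl hc
    · exact Or.inr (Or.inl hc)
    · exact Or.inr (Or.inr ⟨by rw [hc.1, Fin.rev_rev], by rw [hc.2, Fin.rev_rev]⟩)
  · exact absurd rfl hne

end Aux
section Pairs

variable {K : Type*} [Field K] {m n : ℕ}

/-- membership of a position in a pair -/
def pmem {n : ℕ} (p : Fin n × Fin n) (x : Fin n) : Prop := p.1 = x ∨ p.2 = x

lemma dis_of_pmem {p q : Fin n × Fin n}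
    (h : ∀ x, pmem p x → ¬ pmem q x) :
    p.1 ≠ q.1 ∧ p.1 ≠ q.2 ∧ p.2 ≠ q.1 ∧ p.2 ≠ q.2 :=
  ⟨fun he => h p.1 (Or.inl rfl) (Or.inl he.symm),
   fun he => h p.1 (Or.inl rfl) (Or.inr he.symm),
   fun he => h p.2 (Or.inr rfl) (Or.inl he.symm),
   fun he => h p.2 (Or.inr rfl) (Or.inr he.symm)⟩

lemma pmem_of_dis {p q : Fin n × Fin n}
    (h : p.1 ≠ q.1 ∧ p.1 ≠ q.2 ∧ p.2 ≠ q.1 ∧ p.2 ≠ q.2) :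
    ∀ x, pmem p x → ¬ pmem q x := by
  rintro x (rfl | rfl) (h' | h')
  · exact h.1 h'.symm
  · exact h.2.1 h'.symm
  · exact h.2.2.1 h'.symm
  · exact h.2.2.2 h'.symm

/-- ordered pair -/
def mkPair {n : ℕ} (s t : Fin n) : Fin n × Fin n := if s < t then (s, t) else (t, s)

lemma mkPair_lt {s t : Fin n} (h : s ≠ t) : (mkPair s t).1 < (mkPair s t).2 := by
  unfold mkPair
  split_ifs with h1
  · exact h1
  · exact lt_of_le_of_ne (not_lt.1 h1) (Ne.symm h)

lemma mkPair_sympl {s t : Fin n} (idx : Fin n → Fin (2 * m)) (h : idx s = Fin.rev (idx t)) :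
    idx (mkPair s t).1 = Fin.rev (idx (mkPair s t).2) := by
  unfold mkPair
  split_ifs
  · exact h
  · rw [h, Fin.rev_rev]

lemma mkPair_mem {s t x : Fin n} : pmem (mkPair s t) x ↔ x = s ∨ x = t := by
  unfold mkPair pmem
  split_ifs <;> constructor <;> rintro (rfl | rfl) <;> tauto

/-- the other component of a pair -/
def other {n : ℕ} (p : Fin n × Fin n) (z : Fin n) : Fin n := if p.1 = z then p.2 else p.1

lemma other_pmem (p : Fin n × Fin n) (z : Fin n) : pmem p (other p z) := by
  unfold other pmem
  split_ifs <;> simp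

lemma other_ne {p : Fin n × Fin n} (hp : p.1 ≠ p.2) {z : Fin n} (hz : pmem p z) :
    other p z ≠ z := by
  unfold other
  split_ifs with h
  · exact fun he => hp (h.trans he.symm)
  · exact h

lemma other_sympl {p : Fin n × Fin n} (g : Fin n → Fin (2 * m))
    (hgood : g p.1 = Fin.rev (g p.2)) {z : Fin n} (hz : pmem p z) :
    g (other p z) = Fin.rev (g z) := by
  unfold other
  split_ifs with h
  · rw [← h, hgood, Fin.rev_rev]
  · rcases hz with hz | hz
    · exact absurd hz h
    · rw [← hz]; exact hgood

lemma hasPairs_swap (f : ℕ) (s t : Fin n) (g idx : Fin n → Fin (2 * m))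
    (h1 : idx s = g t) (h2 : idx t = g s) (h3 : ∀ j, j ≠ s → j ≠ t → idx j = g j) :
    hasPairs m n f g → hasPairs m n f idx := by
  rintro ⟨P, hg, hd⟩
  set σ := Equiv.swap s t with hσdef
  have hσ : ∀ j, idx (σ j) = g j := by
    intro j
    by_cases hjs : j = s
    · subst hjs; rw [hσdef]; rw [Equiv.swap_apply_left]; exact h2
    by_cases hjt : j = t
    · subst hjt; rw [hσdef]; rw [Equiv.swap_apply_right]; exact h1
    · rw [hσdef, Equiv.swap_apply_of_ne_of_ne hjs hjt]
      exact h3 j hjs hjt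
  refine ⟨fun a => mkPair (σ (P a).1) (σ (P a).2), fun a => ?_, fun a b hab => ?_⟩
  · have hne : σ (P a).1 ≠ σ (P a).2 := fun he =>
      absurd (σ.injective he) (ne_of_lt (hg a).1)
    refine ⟨mkPair_lt hne, mkPair_sympl idx ?_⟩
    rw [hσ, hσ]
    exact (hg a).2
  · apply dis_of_pmem
    intro x hx hx'
    obtain ⟨u, hu, rfl⟩ : ∃ u, pmem (P a) u ∧ x = σ u := by
      rcases mkPair_mem.1 hx with h'' | h''
      · exact ⟨(P a).1, Or.inl rfl, h''⟩
      · exact ⟨(P a).2, Or.inr rfl, h''⟩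
    obtain ⟨v, hv, he⟩ : ∃ v, pmem (P b) v ∧ σ u = σ v := by
      rcases mkPair_mem.1 hx' with h'' | h''
      · exact ⟨(P b).1, Or.inl rfl, h''⟩
      · exact ⟨(P b).2, Or.inr rfl, h''⟩
    exact pmem_of_dis (hd a b hab) u hu (σ.injective he ▸ hv)

lemma hasPairs_transfer (f : ℕ) (s t : Fin n) (hst : s ≠ t)
    (g idx : Fin n → Fin (2 * m))
    (hi : idx s = Fin.rev (idx t)) (hgp : g s = Fin.rev (g t))
    (h3 : ∀ j, j ≠ s → j ≠ t → g j = idx j) :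
    hasPairs m n f g → hasPairs m n f idx := by
  rintro ⟨P, hg, hd⟩
  have hdis : ∀ {a b : Fin f}, a ≠ b → ∀ x, pmem (P a) x → ¬ pmem (P b) x :=
    fun hab => pmem_of_dis (hd _ _ hab)
  have huntouched : ∀ a, ¬ pmem (P a) s → ¬ pmem (P a) t →
      (P a).1 < (P a).2 ∧ idx (P a).1 = Fin.rev (idx (P a).2) := by
    intro a has hat
    refine ⟨(hg a).1, ?_⟩
    have e1 : g (P a).1 = idx (P a).1 :=
      h3 _ (fun he => has (Or.inl he)) (fun he => hat (Or.inl he))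
    have e2 : g (P a).2 = idx (P a).2 :=
      h3 _ (fun he => has (Or.inr he)) (fun he => hat (Or.inr he))
    rw [← e1, ← e2]
    exact (hg a).2
  by_cases hc2 : ∃ a b, a ≠ b ∧ pmem (P a) s ∧ pmem (P b) t
  · obtain ⟨a0, a1, hab, has, hbt⟩ := hc2
    have hat' : ¬ pmem (P a0) t := fun hx => hdis hab t hx hbt
    have hbs' : ¬ pmem (P a1) s := fun hx => hdis hab.symm s hx has
    set x := other (P a0) s with hxdef
    set y := other (P a1) t with hydef
    have hx_mem : pmem (P a0) x := other_pmem _ _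
    have hy_mem : pmem (P a1) y := other_pmem _ _
    have hxs : x ≠ s := other_ne (ne_of_lt (hg a0).1) has
    have hyt : y ≠ t := other_ne (ne_of_lt (hg a1).1) hbt
    have hxt : x ≠ t := fun he => hat' (he ▸ hx_mem)
    have hys : y ≠ s := fun he => hbs' (he ▸ hy_mem)
    have hgx : g x = Fin.rev (g s) := other_sympl g (hg a0).2 has
    have hgy : g y = Fin.rev (g t) := other_sympl g (hg a1).2 hbt
    have hxy : x ≠ y := fun he => hdis hab x hx_mem (he ▸ hy_mem)
    have hix : idx x = Fin.rev (idx y) := by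
      rw [← h3 x hxs hxt, ← h3 y hys hyt, hgx, hgy, hgp, Fin.rev_rev]
    refine ⟨fun a => if a = a0 then mkPair s t else if a = a1 then mkPair x y else P a,
      fun a => ?_, fun a b hab' => ?_⟩
    · by_cases h0 : a = a0
      · simp only [h0, if_pos rfl]
        exact ⟨mkPair_lt hst, mkPair_sympl idx hi⟩
      by_cases h1 : a = a1
      · simp only []
        rw [if_neg h0, if_pos h1]
        exact ⟨mkPair_lt hxy, mkPair_sympl idx hix⟩
      · simp only [if_neg h0, if_neg h1]
        exact huntouched a (fun hp => hdis h0 s hp has) (fun hp => hdis h1 t hp hbt)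
    · have hQ : ∀ (c : Fin f) (x' : Fin n),
          pmem ((if c = a0 then mkPair s t else if c = a1 then mkPair x y else P c)) x' →
          (c = a0 ∧ (x' = s ∨ x' = t)) ∨ (c = a1 ∧ (x' = x ∨ x' = y)) ∨
            (c ≠ a0 ∧ c ≠ a1 ∧ pmem (P c) x') := by
        intro c x' hc
        by_cases h0 : c = a0
        · rw [if_pos h0] at hc
          exact Or.inl ⟨h0, mkPair_mem.1 hc⟩
        by_cases h1 : c = a1
        · rw [if_neg h0, if_pos h1] at hc
          exact Or.inr (Or.inl ⟨h1, mkPair_mem.1 hc⟩)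
        · rw [if_neg h0, if_neg h1] at hc
          exact Or.inr (Or.inr ⟨h0, h1, hc⟩)
      apply dis_of_pmem
      intro x' hxa hxb
      rcases hQ a x' hxa with ⟨ea, hma⟩ | ⟨ea, hma⟩ | ⟨ea0, ea1, hma⟩ <;>
        rcases hQ b x' hxb with ⟨eb, hmb⟩ | ⟨eb, hmb⟩ | ⟨eb0, eb1, hmb⟩
      · exact hab' (ea.trans eb.symm)
      · rcases hma with rfl | rfl <;> rcases hmb with he | he
        · exact hxs he.symm
        · exact hys he.symm
        · exact hxt he.symm
        · exact hyt he.symm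
      · rcases hma with rfl | rfl
        · exact hdis eb0 _ hmb has
        · exact hdis eb1 _ hmb hbt
      · rcases hmb with rfl | rfl <;> rcases hma with he | he
        · exact hxs he.symm
        · exact hys he.symm
        · exact hxt he.symm
        · exact hyt he.symm
      · exact hab' (ea.trans eb.symm)
      · rcases hma with rfl | rfl
        · exact hdis eb0 _ hmb hx_mem
        · exact hdis eb1 _ hmb hy_mem
      · rcases hmb with rfl | rfl
        · exact hdis ea0 _ hma has
        · exact hdis ea1 _ hma hbt
      · rcases hmb with rfl | rfl
        · exact hdis ea0 _ hma hx_mem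
        · exact hdis ea1 _ hma hy_mem
      · exact hdis hab' x' hma hmb
  · by_cases h2 : ∃ a0, pmem (P a0) s ∨ pmem (P a0) t
    · obtain ⟨a0, ha0⟩ := h2
      have hothers : ∀ a, a ≠ a0 → ¬ pmem (P a) s ∧ ¬ pmem (P a) t := by
        intro a ha
        constructor
        · intro hps
          rcases ha0 with h0s | h0t
          · exact hdis ha s hps h0s
          · exact hc2 ⟨a, a0, ha, hps, h0t⟩
        · intro hpt
          rcases ha0 with h0s | h0t
          · exact hc2 ⟨a0, a, fun he => ha he.symm, h0s, hpt⟩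
          · exact hdis ha t hpt h0t
      refine ⟨fun a => if a = a0 then mkPair s t else P a, fun a => ?_, fun a b hab' => ?_⟩
      · by_cases h0 : a = a0
        · simp only [h0, if_pos rfl]
          exact ⟨mkPair_lt hst, mkPair_sympl idx hi⟩
        · simp only [if_neg h0]
          exact huntouched a (hothers a h0).1 (hothers a h0).2
      · have hQ : ∀ (c : Fin f) (x' : Fin n),
            pmem ((if c = a0 then mkPair s t else P c)) x' →
            (c = a0 ∧ (x' = s ∨ x' = t)) ∨ (c ≠ a0 ∧ pmem (P c) x') := by
          intro c x' hc
          by_cases h0 : c = a0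
          · rw [if_pos h0] at hc
            exact Or.inl ⟨h0, mkPair_mem.1 hc⟩
          · rw [if_neg h0] at hc
            exact Or.inr ⟨h0, hc⟩
        apply dis_of_pmem
        intro x' hxa hxb
        rcases hQ a x' hxa with ⟨ea, hma⟩ | ⟨ea0, hma⟩ <;>
          rcases hQ b x' hxb with ⟨eb, hmb⟩ | ⟨eb0, hmb⟩
        · exact hab' (ea.trans eb.symm)
        · rcases hma with rfl | rfl
          · exact (hothers b eb0).1 hmb
          · exact (hothers b eb0).2 hmb
        · rcases hmb with rfl | rfl
          · exact (hothers a ea0).1 hma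
          · exact (hothers a ea0).2 hma
        · exact hdis hab' x' hma hmb
    · push_neg at h2
      exact ⟨P, fun a => huntouched a (h2 a).1 (h2 a).2, hd⟩

end Pairs
section Main

variable {K : Type*} [Field K] {m n : ℕ}

lemma gen_preserve (ζ : K) (f : ℕ)
    (M : Matrix (Fin n → Fin (2 * m)) (Fin n → Fin (2 * m)) K) (hM : M ∈ BMWops K m n ζ)
    (g h : Fin n → Fin (2 * m)) (hne : M g h ≠ 0) :
    hasPairs m n f h → hasPairs m n f g := by
  obtain ⟨k, hk, hMM⟩ := hM
  have hkk : (⟨k, by omega⟩ : Fin n) ≠ ⟨k + 1, hk⟩ :=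
    Fin.ne_of_val_ne (show k ≠ k + 1 by omega)
  rcases hMM with rfl | rfl
  · obtain ⟨hagree, hcases⟩ := bopK_support ζ k hk g h hne
    rcases hcases with ⟨e1, e2⟩ | ⟨e1, e2⟩ | ⟨e1, e2⟩
    · intro hp
      have heq : h = g := by
        funext j
        by_cases hj1 : j = ⟨k, by omega⟩
        · rw [hj1]; exact e1
        by_cases hj2 : j = ⟨k + 1, hk⟩
        · rw [hj2]; exact e2
        · exact hagree j hj1 hj2
      rwa [heq] at hp
    · exact hasPairs_swap f ⟨k, by omega⟩ ⟨k + 1, hk⟩ h g e2.symm e1.symm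
        (fun j hj1 hj2 => (hagree j hj1 hj2).symm)
    · exact hasPairs_transfer f ⟨k, by omega⟩ ⟨k + 1, hk⟩ hkk h g e1 e2 hagree
  · obtain ⟨e1, e2, hagree⟩ := gopK_support ζ k hk g h hne
    exact hasPairs_transfer f ⟨k, by omega⟩ ⟨k + 1, hk⟩ hkk h g e1 e2 hagree

/-- A vector supported on indices without `f` symplectic pairs. -/
def DeadV (m n f : ℕ) {K : Type*} [Field K] (w : (Fin n → Fin (2 * m)) → K) : Prop :=
  ∀ h, w h ≠ 0 → ¬ hasPairs m n f h

lemma exists_of_vecMul_ne (w : (Fin n → Fin (2 * m)) → K)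
    (M : Matrix (Fin n → Fin (2 * m)) (Fin n → Fin (2 * m)) K)
    (h' : Fin n → Fin (2 * m)) (hne : Matrix.vecMul w M h' ≠ 0) :
    ∃ h, w h ≠ 0 ∧ M h h' ≠ 0 := by
  by_contra hc
  push_neg at hc
  apply hne
  show (∑ g, w g * M g h') = 0
  exact Finset.sum_eq_zero fun g _ => by
    by_cases hg : w g = 0
    · rw [hg, zero_mul]
    · rw [hc g hg, mul_zero]

lemma dead_closure (ζ : K) (f : ℕ)
    (u : Matrix (Fin n → Fin (2 * m)) (Fin n → Fin (2 * m)) K)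
    (hu : u ∈ Subring.closure (BMWops K m n ζ))
    (w : (Fin n → Fin (2 * m)) → K) (hw : DeadV m n f w) :
    DeadV m n f (Matrix.vecMul w u) := by
  let S : Subring (Matrix (Fin n → Fin (2 * m)) (Fin n → Fin (2 * m)) K) :=
    { carrier := {M | ∀ v, DeadV m n f v → DeadV m n f (Matrix.vecMul v M)}
      one_mem' := fun v hv => by rwa [Matrix.vecMul_one]
      mul_mem' := fun {a b} ha hb v hv => by
        rw [← Matrix.vecMul_vecMul]
        exact hb _ (ha _ hv)
      zero_mem' := fun v hv h hne => absurd (by simp [Matrix.vecMul_zero]) hne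
      add_mem' := fun {a b} ha hb v hv h hne => by
        have hor : Matrix.vecMul v a h ≠ 0 ∨ Matrix.vecMul v b h ≠ 0 := by
          by_contra hcc
          push_neg at hcc
          exact hne (by rw [Matrix.vecMul_add]; simp [Pi.add_apply, hcc.1, hcc.2])
        rcases hor with hx | hx
        · exact ha v hv h hx
        · exact hb v hv h hx
      neg_mem' := fun {a} ha v hv h hne => by
        refine ha v hv h fun hz => hne ?_
        rw [Matrix.vecMul_neg]
        simp [Pi.neg_apply, hz] }
  have hS : Subring.closure (BMWops K m n ζ) ≤ S := by
    refine Subring.closure_le.2 ?_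
    intro M hM v hv h' hne
    obtain ⟨h, hh, hMh⟩ := exists_of_vecMul_ne v M h' hne
    exact fun hp => hv h hh (gen_preserve ζ f M hM h h' hMh hp)
  exact hS hu w hw

lemma key_support (ζ : K) (idx : Fin n → Fin (2 * m)) :
    ∀ j : ℕ, 2 * j ≤ n → ∀ h : Fin n → Fin (2 * m),
      Matrix.vecMul (Pi.single idx (1 : K))
        (((List.range j).map fun i => gopK K m n ζ (2 * i)).prod) h ≠ 0 →
      ∀ p : Fin n, 2 * j ≤ (p : ℕ) → h p = idx p := by
  intro j
  induction j with
  | zero =>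
    intro _ h hne p _
    simp only [List.range_zero, List.map_nil, List.prod_nil, Matrix.vecMul_one] at hne
    by_cases he : h = idx
    · rw [he]
    · rw [Pi.single_apply, if_neg he] at hne
      exact absurd rfl hne
  | succ j ih =>
    intro hj h hne p hp
    simp only [List.range_succ, List.map_append, List.prod_append, List.map_cons,
      List.map_nil, List.prod_cons, List.prod_nil, mul_one] at hne
    rw [← Matrix.vecMul_vecMul] at hne
    obtain ⟨g, hg, hgh⟩ := exists_of_vecMul_ne _ _ _ hne
    have h2j : 2 * j + 1 < n := by omega
    obtain ⟨_, _, hagree⟩ := gopK_support ζ (2 * j) h2j g h hgh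
    have hp1 : p ≠ (⟨2 * j, by omega⟩ : Fin n) :=
      Fin.ne_of_val_ne (show (p : ℕ) ≠ 2 * j by omega)
    have hp2 : p ≠ (⟨2 * j + 1, h2j⟩ : Fin n) :=
      Fin.ne_of_val_ne (show (p : ℕ) ≠ 2 * j + 1 by omega)
    rw [hagree p hp1 hp2]
    exact ih (by omega) g hg p (by omega)

lemma kill_aux (ζ : K) (idx : Fin n → Fin (2 * m)) :
    ∀ j : ℕ, 2 * j ≤ n →
    (∃ i, ∃ hbound : 2 * i + 1 < n, i < j ∧
      idx ⟨2 * i, by omega⟩ ≠ Fin.rev (idx ⟨2 * i + 1, hbound⟩)) →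
    Matrix.vecMul (Pi.single idx (1 : K))
      (((List.range j).map fun i => gopK K m n ζ (2 * i)).prod) = 0 := by
  intro j
  induction j with
  | zero => rintro _ ⟨i, _, hlt, _⟩; omega
  | succ j ih =>
    rintro hj ⟨i, hbound, hlt, hbad⟩
    simp only [List.range_succ, List.map_append, List.prod_append, List.map_cons,
      List.map_nil, List.prod_cons, List.prod_nil, mul_one]
    rw [← Matrix.vecMul_vecMul]
    by_cases hij : i < j
    · rw [ih (by omega) ⟨i, hbound, hij, hbad⟩, Matrix.zero_vecMul]
    · have hij' : i = j := by omega
      subst hij'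
      funext h'
      simp only [Pi.zero_apply]
      by_contra hne
      obtain ⟨g, hg, hgh⟩ := exists_of_vecMul_ne _ _ _ hne
      obtain ⟨hpair, _, _⟩ := gopK_support ζ (2 * i) hbound g h' hgh
      have e1 : g ⟨2 * i, by omega⟩ = idx ⟨2 * i, by omega⟩ :=
        key_support ζ idx i (by omega) g hg _ (show 2 * i ≤ 2 * i from Nat.le_refl _)
      have e2 : g ⟨2 * i + 1, hbound⟩ = idx ⟨2 * i + 1, hbound⟩ :=
        key_support ζ idx i (by omega) g hg _ (show 2 * i ≤ 2 * i + 1 from Nat.le_succ _)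
      exact hbad (by rw [← e1, ← e2]; exact hpair)

lemma hasPairs_of_all (f : ℕ) (h2f : 2 * f ≤ n) (idx : Fin n → Fin (2 * m))
    (hall : ∀ i (hi : i < f),
      idx ⟨2 * i, by omega⟩ = Fin.rev (idx ⟨2 * i + 1, by omega⟩)) :
    hasPairs m n f idx := by
  refine ⟨fun a => (⟨2 * (a : ℕ), by omega⟩, ⟨2 * (a : ℕ) + 1, by omega⟩),
    fun a => ⟨by rw [Fin.mk_lt_mk]; omega, hall (a : ℕ) a.isLt⟩, fun a b hab => ?_⟩
  have hab' : (a : ℕ) ≠ (b : ℕ) := fun hc => hab (Fin.ext hc)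
  refine ⟨?_, ?_, ?_, ?_⟩ <;> (intro he; rw [Fin.mk.injEq] at he; omega)

lemma single_kill (ζ : K) (f : ℕ) (h2f : 2 * f ≤ n) (idx : Fin n → Fin (2 * m))
    (hno : ¬ hasPairs m n f idx) :
    Matrix.vecMul (Pi.single idx (1 : K))
      (((List.range f).map fun j => gopK K m n ζ (2 * j)).prod) = 0 := by
  by_cases hall : ∀ i (hi : i < f),
      idx ⟨2 * i, by omega⟩ = Fin.rev (idx ⟨2 * i + 1, by omega⟩)
  · exact absurd (hasPairs_of_all f h2f idx hall) hno
  · push_neg at hall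
    obtain ⟨i, hi, hbad⟩ := hall
    exact kill_aux ζ idx f h2f ⟨i, by omega, hi, hbad⟩

lemma dead_kill (ζ : K) (f : ℕ) (h2f : 2 * f ≤ n)
    (w : (Fin n → Fin (2 * m)) → K) (hw : DeadV m n f w) :
    Matrix.vecMul w (((List.range f).map fun j => gopK K m n ζ (2 * j)).prod) = 0 := by
  funext h'
  simp only [Pi.zero_apply]
  show (∑ g, w g * (((List.range f).map fun j => gopK K m n ζ (2 * j)).prod) g h') = 0
  refine Finset.sum_eq_zero fun g _ => ?_
  by_cases hg : w g = 0
  · rw [hg, zero_mul]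
  · have hrow : (((List.range f).map fun j => gopK K m n ζ (2 * j)).prod) g = 0 := by
      have hsk := single_kill ζ f h2f g (hw g hg)
      have h2 : Matrix.vecMul (Pi.single g (1 : K))
          (((List.range f).map fun j => gopK K m n ζ (2 * j)).prod)
          = (((List.range f).map fun j => gopK K m n ζ (2 * j)).prod) g := by
        funext j
        simp [Matrix.vecMul, dotProduct, Pi.single_apply, ite_mul]
      rw [← h2]
      exact hsk
    rw [hrow]
    simp

end Main
theorem stmt16 (K : Type*) [Field K] (ζ : K) (hζ : ζ ≠ 0) (m n f : ℕ)
    (h2f : 2 * f ≤ n) (idx : Fin n → Fin (2 * m)) :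
    -- γ'_{k+1} kills v_idx as soon as slots k, k+1 do not carry a symplectic pair
    (∀ (k : ℕ) (h : k + 1 < n),
      idx ⟨k, by omega⟩ ≠ Fin.rev (idx ⟨k + 1, h⟩) →
      Matrix.vecMul (Pi.single idx (1 : K)) (gopK K m n ζ k) = 0) ∧
    -- if f > ℓ_s(idx) then E_1 E_3 ⋯ E_{2f-1} kills v_idx, and so does
    -- the whole two-sided ideal B^{(f)}
    (¬ hasPairs m n f idx →
      Matrix.vecMul (Pi.single idx (1 : K))
        (((List.range f).map fun j => gopK K m n ζ (2 * j)).prod) = 0 ∧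
      ∀ u ∈ Subring.closure (BMWops K m n ζ),
        ∀ w ∈ Subring.closure (BMWops K m n ζ),
          Matrix.vecMul (Pi.single idx (1 : K))
            (u * (((List.range f).map fun j => gopK K m n ζ (2 * j)).prod) * w)
            = 0) := by
  constructor
  · intro k hk hne
    funext h
    simp only [Pi.zero_apply]
    by_contra hz0
    obtain ⟨g, hg, hgh⟩ := exists_of_vecMul_ne _ _ _ hz0
    have hgidx : g = idx := by
      by_contra he
      rw [Pi.single_apply, if_neg he] at hg
      exact absurd rfl hg
    subst hgidx
    exact hne (gopK_support ζ k hk g h hgh).1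
  · intro hno
    refine ⟨single_kill ζ f h2f idx hno, ?_⟩
    intro u hu w hw
    rw [← Matrix.vecMul_vecMul, ← Matrix.vecMul_vecMul]
    have hsingle : DeadV m n f (Pi.single idx (1 : K)) := by
      intro h hne
      by_cases he : h = idx
      · rwa [he]
      · rw [Pi.single_apply, if_neg he] at hne
        exact absurd rfl hne
    have hdead : DeadV m n f (Matrix.vecMul (Pi.single idx (1 : K)) u) :=
      dead_closure ζ f u hu _ hsingle
    rw [dead_kill ζ f h2f _ hdead, Matrix.zero_vecMul]
end
end
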